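/- arXiv:2602.16339 — 3 statements merged into one kernel-verified Lean document; each statement's English description precedes it below -/
import Mathlib

section
/- Let d ≥ 1, s ∈ (0,1]. For each coordinate direction e_j, there exists C = C(d,s) > 0 such that sup_{x∈ℤ^d} |G_t^{(s)}(x+e_j) - G_t^{(s)}(x)| ≤ C t^{-(d+1)/(2s)} for all t > 0. -/
set_option maxHeartbeats 1000000

open MeasureTheory Real

/-- The symbol of the discrete Laplacian on the torus. -/
noncomputable def symb (d : ℕ) (ξ : Fin d → ℝ) : ℝ := 4 * ∑ j, Real.sin (ξ j / 2) ^ 2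

/-- The lattice fractional heat kernel
`G_t^{(s)}(x) = (2π)^{-d} ∫_{[-π,π]^d} e^{-t ω(ξ)^s} e^{i⟨x,ξ⟩} dξ`. -/
noncomputable def latticeKernel (d : ℕ) (s t : ℝ) (x : Fin d → ℤ) : ℂ :=
  ((2 * π) ^ d)⁻¹ •
    ∫ ξ in Set.Icc (fun _ : Fin d => -π) (fun _ : Fin d => π),
      Complex.exp (-(t * (symb d ξ) ^ s : ℝ) + Complex.I * ((∑ j, (x j : ℝ) * ξ j : ℝ) : ℂ))

section Aux
open Set

lemma aux_int_Ioi {p b q : ℝ} (hp : 0 < p) (hb : 0 < b) (hq : -1 < q) :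
    IntegrableOn (fun x : ℝ => x ^ q * Real.exp (-(b * x ^ p))) (Ioi 0) := by
  set c : ℝ := (q + 1) / p - 1 with hc
  have hc1 : (0:ℝ) < (q+1)/p := div_pos (by linarith) hp
  have h0 : IntegrableOn (fun x : ℝ => Real.exp (-x) * x ^ c) (Ioi 0) := by
    simpa [hc] using Real.GammaIntegral_convergent hc1
  have h1 : IntegrableOn (fun x : ℝ => Real.exp (-(b*x)) * (b*x) ^ c) (Ioi 0) := by
    have := (integrableOn_Ioi_comp_mul_left_iff
      (fun x : ℝ => Real.exp (-x) * x ^ c) 0 hb).mpr (by simpa using h0)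
    simpa using this
  have h2 : IntegrableOn (fun x : ℝ => x ^ c * Real.exp (-(b*x))) (Ioi 0) := by
    refine IntegrableOn.congr_fun (h1.const_mul (b ^ (-c))) (fun x hx => ?_) measurableSet_Ioi
    have hx0 : (0:ℝ) < x := hx
    rw [Real.mul_rpow hb.le hx0.le]
    rw [show b ^ (-c) * (Real.exp (-(b*x)) * (b ^ c * x ^ c)) =
      (b ^ (-c) * b ^ c) * (x ^ c * Real.exp (-(b*x))) by ring, ← Real.rpow_add hb,
      neg_add_cancel, Real.rpow_zero, one_mul]
  have h4 := (integrableOn_Ioi_comp_rpow_iff'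
      (fun y : ℝ => y ^ c * Real.exp (-(b*y))) hp.ne').mpr h2
  refine h4.congr_fun (fun x hx => ?_) measurableSet_Ioi
  have hx0 : (0:ℝ) < x := hx
  dsimp only
  rw [smul_eq_mul, ← Real.rpow_mul hx0.le, ← mul_assoc, ← Real.rpow_add hx0]
  congr 2
  field_simp [hc]
  rw [hc, mul_sub, mul_div_cancel₀ (q + 1) hp.ne']
  ring

lemma aux_integrable_comp_abs {f : ℝ → ℝ} (hf : IntegrableOn (fun x => f |x|) (Ioi 0)) :
    Integrable (fun x => f |x|) := by
  have int_Iic : IntegrableOn (fun x ↦ f |x|) (Iic 0) := by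
    rw [← Measure.map_neg_eq_self (volume : Measure ℝ)]
    have m : MeasurableEmbedding fun x : ℝ => -x := (Homeomorph.neg ℝ).measurableEmbedding
    rw [m.integrableOn_map_iff]
    simp_rw [Function.comp_def, abs_neg, neg_preimage, neg_Iic, neg_zero]
    exact (integrableOn_Ici_iff_integrableOn_Ioi).mpr hf
  rw [← integrableOn_univ, ← Iic_union_Ioi (a := (0:ℝ))]
  exact int_Iic.union hf

lemma aux_sq_rpow (s u : ℝ) : (u^2) ^ s = |u| ^ (2*s) := by
  rw [← sq_abs, ← Real.rpow_natCast |u| 2, ← Real.rpow_mul (abs_nonneg u)]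
  norm_num

lemma gfun_integrable {s b q : ℝ} (hs : 0 < s) (hb : 0 < b) (hq : -1 < q) :
    Integrable (fun u : ℝ => |u| ^ q * Real.exp (-(b * (u^2) ^ s))) := by
  have heq : (fun u : ℝ => |u| ^ q * Real.exp (-(b * (u^2) ^ s)))
      = fun u : ℝ => |u| ^ q * Real.exp (-(b * |u| ^ (2*s))) := by
    funext u; rw [aux_sq_rpow]
  rw [heq]
  apply aux_integrable_comp_abs (f := fun x : ℝ => x ^ q * Real.exp (-(b * x ^ (2*s))))
  refine IntegrableOn.congr_fun (aux_int_Ioi (p := 2*s) (by positivity) hb hq) (fun x hx => ?_)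
    measurableSet_Ioi
  rw [abs_of_pos hx]

lemma gfun_integral {s b q : ℝ} (hs : 0 < s) (hb : 0 < b) (hq : -1 < q) :
    ∫ u : ℝ, |u| ^ q * Real.exp (-(b * (u^2) ^ s))
      = b ^ (-(q + 1) / (2*s)) * (2 * (1 / (2*s)) * Real.Gamma ((q + 1) / (2*s))) := by
  have heq : (fun u : ℝ => |u| ^ q * Real.exp (-(b * (u^2) ^ s)))
      = fun u : ℝ => |u| ^ q * Real.exp (-(b * |u| ^ (2*s))) := by
    funext u; rw [aux_sq_rpow]
  rw [heq]
  rw [integral_comp_abs (f := fun x : ℝ => x ^ q * Real.exp (-(b * x ^ (2*s))))]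
  have := integral_rpow_mul_exp_neg_mul_rpow (p := 2*s) (q := q) (b := b)
    (by linarith) hq hb
  simp_rw [neg_mul] at this
  rw [this]
  ring

lemma aux_abs_exp_I_sub_one (θ : ℝ) : ‖Complex.exp (Complex.I * θ) - 1‖ ≤ |θ| := by
  rw [mul_comm, Complex.exp_mul_I, ← Complex.ofReal_cos, ← Complex.ofReal_sin]
  have h1 : (Real.cos θ : ℂ) + (Real.sin θ : ℂ) * Complex.I - 1
      = ((Real.cos θ - 1 : ℝ) : ℂ) + ((Real.sin θ : ℝ) : ℂ) * Complex.I := by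
    push_cast; ring
  rw [h1, Complex.norm_add_mul_I]
  have h2 : (Real.cos θ - 1)^2 + Real.sin θ ^ 2 ≤ θ ^ 2 := by
    have hh := Real.sin_sq_le_sq (x := θ/2)
    have hc := Real.cos_sq (θ/2)
    have hd := Real.sin_sq_add_cos_sq (θ/2)
    have he : 2 * (θ/2) = θ := by ring
    rw [he] at hc
    nlinarith [Real.sin_sq_add_cos_sq θ]
  calc Real.sqrt ((Real.cos θ - 1)^2 + Real.sin θ ^ 2) ≤ Real.sqrt (θ^2) :=
        Real.sqrt_le_sqrt h2
    _ = |θ| := Real.sqrt_sq_eq_abs θ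

lemma aux_sin_sq_ge {u : ℝ} (hu : |u| ≤ π/2) : (2/π * u)^2 ≤ Real.sin u ^ 2 := by
  have h1 : 2/π * |u| ≤ Real.sin |u| := Real.mul_le_sin (abs_nonneg u) hu
  have h0 : 0 ≤ 2/π * |u| := by positivity
  have h3 : Real.sin |u| ^ 2 = Real.sin u ^ 2 := by
    rcases abs_choice u with h | h <;> rw [h] <;> simp [Real.sin_neg]
  calc (2/π*u)^2 = (2/π*|u|)^2 := by rw [mul_pow, mul_pow, sq_abs]
    _ ≤ Real.sin |u| ^ 2 := by nlinarith
    _ = _ := h3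

lemma aux_symb_ge {d : ℕ} {ξ : Fin d → ℝ} (h : ∀ k, |ξ k| ≤ π) :
    (4/π^2) * ∑ k, (ξ k)^2 ≤ symb d ξ := by
  unfold symb
  rw [Finset.mul_sum, Finset.mul_sum]
  refine Finset.sum_le_sum (fun k _ => ?_)
  have hk : |ξ k / 2| ≤ π / 2 := by
    rw [abs_div, abs_two]
    linarith [h k]
  have := aux_sin_sq_ge hk
  calc 4/π^2 * ξ k^2 = (2/π * (ξ k/2))^2 * 4 := by
        field_simp
    _ ≤ Real.sin (ξ k / 2)^2 * 4 := by nlinarith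
    _ = 4 * Real.sin (ξ k / 2)^2 := by ring

lemma aux_exp_sum_bound {d : ℕ} (hd : 1 ≤ d) {s t : ℝ} (hs : 0 < s) (ht : 0 < t)
    {ξ : Fin d → ℝ} (hξ : ∀ k, |ξ k| ≤ π) :
    ∑ k, t * ((4/π^2)^s / d) * ((ξ k ^ 2) ^ s) ≤ t * symb d ξ ^ s := by
  set S := ∑ k, (ξ k)^2 with hSdef
  have hS : 0 ≤ S := Finset.sum_nonneg (fun i _ => sq_nonneg _)
  have hπ : (0:ℝ) < 4/π^2 := by positivity
  have h2 : ((4/π^2) * S)^s ≤ symb d ξ ^ s :=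
    Real.rpow_le_rpow (by positivity) (aux_symb_ge hξ) hs.le
  have h3 : ((4/π^2)*S)^s = (4/π^2)^s * S^s := Real.mul_rpow hπ.le hS
  have h5 : ∑ k, ((ξ k)^2)^s ≤ (d:ℝ) * S^s := by
    calc ∑ k, ((ξ k)^2)^s ≤ ∑ _k : Fin d, S^s :=
          Finset.sum_le_sum (fun k _ => Real.rpow_le_rpow (sq_nonneg _)
            (Finset.single_le_sum (fun i _ => sq_nonneg (ξ i)) (Finset.mem_univ k)) hs.le)
      _ = (d:ℝ) * S^s := by simp [Finset.sum_const, nsmul_eq_mul]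
  have hd0 : (0:ℝ) < (d:ℝ) := by exact_mod_cast hd
  calc ∑ k, t * ((4/π^2)^s / d) * ((ξ k ^ 2) ^ s)
      = t * ((4/π^2)^s / d) * ∑ k, ((ξ k)^2)^s := by rw [Finset.mul_sum]
    _ ≤ t * ((4/π^2)^s / d) * ((d:ℝ) * S^s) := by
        apply mul_le_mul_of_nonneg_left h5 (by positivity)
    _ = t * ((4/π^2)^s * S^s) := by field_simp
    _ = t * ((4/π^2)*S)^s := by rw [h3]
    _ ≤ t * symb d ξ ^ s := mul_le_mul_of_nonneg_left h2 ht.le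

end Aux

open Set in
/-- Unit-step increment bound:
`sup_x |G_t^{(s)}(x+e_j) - G_t^{(s)}(x)| ≤ C t^{-(d+1)/(2s)}` for all `t > 0`. -/
theorem stmt_5 (d : ℕ) (hd : 1 ≤ d) (s : ℝ) (hs : 0 < s) (hs1 : s ≤ 1) :
    ∃ C : ℝ, 0 < C ∧ ∀ t : ℝ, 0 < t → ∀ j : Fin d, ∀ x : Fin d → ℤ,
      ‖latticeKernel d s t (x + Pi.single j 1) - latticeKernel d s t x‖ ≤
        C * t ^ (-((d : ℝ) + 1) / (2 * s)) := by
  have hd0 : (0:ℝ) < d := by exact_mod_cast hd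
  set c0 : ℝ := (4/π^2)^s / d with hc0def
  have hc0 : 0 < c0 := by
    apply div_pos _ hd0
    exact Real.rpow_pos_of_pos (by positivity) s
  set KK : ℝ → ℝ := fun q =>
    c0 ^ (-(q + 1) / (2*s)) * (2 * (1 / (2*s)) * Real.Gamma ((q + 1) / (2*s))) with hKKdef
  have hKKpos : ∀ q : ℝ, -1 < q → 0 < KK q := by
    intro q hq
    have hg : 0 < Real.Gamma ((q+1)/(2*s)) :=
      Real.Gamma_pos_of_pos (div_pos (by linarith) (by positivity))
    exact mul_pos (Real.rpow_pos_of_pos hc0 _) (by positivity)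
  have hK1 := hKKpos 1 (by norm_num)
  have hK0 := hKKpos 0 (by norm_num)
  refine ⟨((2*π)^d)⁻¹ * (KK 1 * KK 0 ^ (d-1)), by positivity, ?_⟩
  intro t ht j x
  set box : Set (Fin d → ℝ) := Set.Icc (fun _ : Fin d => -π) (fun _ : Fin d => π) with hbox
  set F : (Fin d → ℤ) → (Fin d → ℝ) → ℂ := fun y ξ =>
    Complex.exp ((-(t * (symb d ξ) ^ s : ℝ) : ℂ) + Complex.I * ((∑ k, (y k : ℝ) * ξ k : ℝ) : ℂ))
    with hF
  have hkerdef : ∀ y : Fin d → ℤ, latticeKernel d s t y = ((2*π)^d)⁻¹ • ∫ ξ in box, F y ξ :=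
    fun y => rfl
  set b : ℝ := t * c0 with hbdef
  have hb : 0 < b := mul_pos ht hc0
  set q : Fin d → ℝ := fun k => if k = j then 1 else 0 with hq
  have hqk : ∀ k, -1 < q k := by intro k; dsimp [q]; split <;> norm_num
  set g : Fin d → ℝ → ℝ := fun k u => |u| ^ (q k) * Real.exp (-(b * (u^2) ^ s)) with hg
  have hgint : ∀ k, Integrable (g k) := fun k => gfun_integrable hs hb (hqk k)
  have hgprod : Integrable (fun ξ : Fin d → ℝ => ∏ k, g k (ξ k)) :=
    Integrable.fintype_prod (𝕜 := ℝ) hgint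
  have hgnn : ∀ ξ : Fin d → ℝ, 0 ≤ ∏ k, g k (ξ k) := fun ξ =>
    Finset.prod_nonneg fun k _ =>
      mul_nonneg (Real.rpow_nonneg (abs_nonneg _) _) (Real.exp_nonneg _)
  -- continuity and integrability of F y on box
  have hsymbc : Continuous (symb d) := by unfold symb; fun_prop
  have hcont : ∀ y : Fin d → ℤ, Continuous (F y) := by
    intro y
    apply Complex.continuous_exp.comp
    apply Continuous.add
    · apply Continuous.neg
      apply Complex.continuous_ofReal.comp
      exact continuous_const.mul (hsymbc.rpow_const (fun _ => Or.inr hs.le))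
    · exact continuous_const.mul (Complex.continuous_ofReal.comp (by fun_prop))
  have hIntF : ∀ y : Fin d → ℤ, IntegrableOn (F y) box := fun y =>
    (hcont y).continuousOn.integrableOn_compact isCompact_Icc
  -- pointwise bound
  have hpt : ∀ ξ ∈ box, ‖F (x + Pi.single j 1) ξ - F x ξ‖ ≤ ∏ k, g k (ξ k) := by
    intro ξ hξ
    have hξk : ∀ k, |ξ k| ≤ π := fun k => abs_le.mpr ⟨hξ.1 k, hξ.2 k⟩
    have hsum : (∑ k, (((x + Pi.single j 1 : Fin d → ℤ)) k : ℝ) * ξ k)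
        = (∑ k, (x k : ℝ) * ξ k) + ξ j := by
      have h1 : ∀ k : Fin d, (((x + Pi.single j 1 : Fin d → ℤ)) k : ℝ) * ξ k
          = (x k : ℝ) * ξ k + (if k = j then ξ k else 0) := by
        intro k
        simp only [Pi.add_apply, Pi.single_apply]
        split <;> push_cast <;> ring
      rw [Finset.sum_congr rfl (fun k _ => h1 k), Finset.sum_add_distrib,
        Finset.sum_ite_eq' Finset.univ j (fun k => ξ k)]
      simp
    have hfact : F (x + Pi.single j 1) ξ - F x ξ
        = F x ξ * (Complex.exp (Complex.I * ((ξ j : ℝ) : ℂ)) - 1) := by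
      dsimp only [F]
      rw [hsum]
      push_cast
      have hexp : ∀ z w : ℂ, Complex.exp (z + w) - Complex.exp z
          = Complex.exp z * (Complex.exp w - 1) := fun z w => by rw [Complex.exp_add]; ring
      rw [mul_add, ← add_assoc]
      exact hexp _ _
    rw [hfact, norm_mul]
    have habs1 : ‖F x ξ‖ = Real.exp (-(t * symb d ξ ^ s)) := by
      dsimp only [F]
      rw [Complex.norm_exp]
      congr 1
      simp
    rw [habs1]
    have h2 : ‖Complex.exp (Complex.I * ((ξ j : ℝ) : ℂ)) - 1‖ ≤ |ξ j| := by
      exact aux_abs_exp_I_sub_one (ξ j)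
    have h3 : Real.exp (-(t * symb d ξ ^ s)) ≤ ∏ k, Real.exp (-(b * ((ξ k)^2) ^ s)) := by
      rw [← Real.exp_sum]
      apply Real.exp_le_exp.mpr
      have h4 := aux_exp_sum_bound hd hs ht hξk
      have h5 : ∑ k, -(b * ((ξ k)^2) ^ s) = -∑ k, b * ((ξ k)^2) ^ s := by
        rw [← Finset.sum_neg_distrib]
      rw [h5]
      apply neg_le_neg
      calc ∑ k, b * ((ξ k)^2) ^ s = ∑ k, t * ((4/π^2)^s / d) * ((ξ k ^ 2) ^ s) := by
            apply Finset.sum_congr rfl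
            intro k _
            rw [hbdef, hc0def]
          _ ≤ t * symb d ξ ^ s := h4
    calc Real.exp (-(t * symb d ξ ^ s)) * ‖Complex.exp (Complex.I * ((ξ j : ℝ) : ℂ)) - 1‖
        ≤ (∏ k, Real.exp (-(b * ((ξ k)^2) ^ s))) * |ξ j| :=
          mul_le_mul h3 h2 (norm_nonneg _) (Finset.prod_nonneg fun k _ => (Real.exp_nonneg _))
      _ = (∏ k, |ξ k| ^ (q k)) * ∏ k, Real.exp (-(b * ((ξ k)^2) ^ s)) := by
          rw [mul_comm]
          congr 1
          rw [← Finset.mul_prod_erase Finset.univ _ (Finset.mem_univ j)]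
          have hj : |ξ j| ^ (q j) = |ξ j| := by
            dsimp [q]; rw [if_pos rfl, Real.rpow_one]
          have he : ∀ k ∈ Finset.univ.erase j, |ξ k| ^ (q k) = 1 := by
            intro k hk
            dsimp [q]
            rw [if_neg (Finset.mem_erase.mp hk).1, Real.rpow_zero]
          rw [hj, Finset.prod_congr rfl he, Finset.prod_const_one, mul_one]
      _ = ∏ k, g k (ξ k) := by
          rw [← Finset.prod_mul_distrib]
  -- main chain
  have key : latticeKernel d s t (x + Pi.single j 1) - latticeKernel d s t x
      = ((2*π)^d)⁻¹ • ∫ ξ in box, (F (x + Pi.single j 1) ξ - F x ξ) := by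
    rw [hkerdef, hkerdef, ← smul_sub, integral_sub (hIntF _) (hIntF _)]
  rw [key]
  have hc2 : (0:ℝ) ≤ ((2*π)^d)⁻¹ := by positivity
  rw [norm_smul, Real.norm_eq_abs, abs_of_nonneg hc2]
  have hint_val : ∀ k, ∫ u : ℝ, g k u = t ^ (-(q k + 1)/(2*s)) * KK (q k) := by
    intro k
    dsimp only [g]
    rw [gfun_integral hs hb (hqk k), hbdef, Real.mul_rpow ht.le hc0.le]
    dsimp only [KK]
    ring
  have hIntDiff : IntegrableOn
      (fun ξ : Fin d → ℝ => ‖F (x + Pi.single j 1) ξ - F x ξ‖) box :=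
    ((hIntF (x + Pi.single j 1)).sub (hIntF x)).norm
  have hchain : ‖∫ ξ in box, (F (x + Pi.single j 1) ξ - F x ξ)‖
      ≤ ∏ k, (t ^ (-(q k + 1)/(2*s)) * KK (q k)) := by
    calc ‖∫ ξ in box, (F (x + Pi.single j 1) ξ - F x ξ)‖
        ≤ ∫ ξ in box, ‖F (x + Pi.single j 1) ξ - F x ξ‖ := norm_integral_le_integral_norm _
      _ ≤ ∫ ξ in box, ∏ k, g k (ξ k) :=
          setIntegral_mono_on hIntDiff hgprod.integrableOn measurableSet_Icc hpt
      _ ≤ ∫ ξ : Fin d → ℝ, ∏ k, g k (ξ k) :=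
          setIntegral_le_integral hgprod (Filter.Eventually.of_forall hgnn)
      _ = ∏ k, ∫ u : ℝ, g k u := integral_fintype_prod_eq_prod (ι := Fin d) g
      _ = ∏ k, (t ^ (-(q k + 1)/(2*s)) * KK (q k)) :=
          Finset.prod_congr rfl fun k _ => hint_val k
  have hprodval : ∏ k, (t ^ (-(q k + 1)/(2*s)) * KK (q k))
      = (KK 1 * KK 0 ^ (d-1)) * t ^ (-((d : ℝ) + 1) / (2 * s)) := by
    rw [← Finset.mul_prod_erase Finset.univ _ (Finset.mem_univ j)]
    have hj : t ^ (-(q j + 1)/(2*s)) * KK (q j) = t ^ (-(2:ℝ)/(2*s)) * KK 1 := by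
      dsimp only [q]; rw [if_pos rfl]; norm_num
    have he : ∀ k ∈ Finset.univ.erase j,
        t ^ (-(q k + 1)/(2*s)) * KK (q k) = t ^ (-(1:ℝ)/(2*s)) * KK 0 := by
      intro k hk
      dsimp only [q]; rw [if_neg (Finset.mem_erase.mp hk).1]; norm_num
    rw [hj, Finset.prod_congr rfl he, Finset.prod_const,
      Finset.card_erase_of_mem (Finset.mem_univ j), Finset.card_univ, Fintype.card_fin]
    rw [mul_pow, ← Real.rpow_natCast (t ^ (-(1:ℝ)/(2*s))) (d-1), ← Real.rpow_mul ht.le]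
    rw [show t ^ (-(2:ℝ)/(2*s)) * KK 1 * (t ^ (-(1:ℝ)/(2*s) * ((d-1 : ℕ):ℝ)) * KK 0 ^ (d-1))
        = (KK 1 * KK 0 ^ (d-1)) * (t ^ (-(2:ℝ)/(2*s)) * t ^ (-(1:ℝ)/(2*s) * ((d-1 : ℕ):ℝ)))
        by ring, ← Real.rpow_add ht]
    congr 2
    rw [Nat.cast_sub hd, Nat.cast_one]
    field_simp
    ring
  calc ((2*π)^d)⁻¹ * ‖∫ ξ in box, (F (x + Pi.single j 1) ξ - F x ξ)‖
      ≤ ((2*π)^d)⁻¹ * ((KK 1 * KK 0 ^ (d-1)) * t ^ (-((d : ℝ) + 1) / (2 * s))) := by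
        apply mul_le_mul_of_nonneg_left _ hc2
        rw [← hprodval]
        exact hchain
    _ = ((2*π)^d)⁻¹ * (KK 1 * KK 0 ^ (d-1)) * t ^ (-((d : ℝ) + 1) / (2 * s)) := by ring
end

section
/- Let d ≥ 1, s ∈ (0,1]. There exists C = C(d,s) > 0 such that for all t > 0 and all x, y ∈ ℤ^d, |G_t^{(s)}(x-y) - G_t^{(s)}(x)| ≤ C t^{-d/(2s)} min{1, |y| t^{-1/(2s)}}, where |y| is the Euclidean norm of y. -/
open MeasureTheory Real Set

/-- Euclidean norm of a lattice point. -/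
noncomputable def latNorm {d : ℕ} (y : Fin d → ℤ) : ℝ :=
  Real.sqrt (∑ j, ((y j : ℝ)) ^ 2)

lemma my_integrable_comp_abs {f : ℝ → ℝ} (hf : IntegrableOn f (Ioi 0)) :
    Integrable fun x : ℝ => f |x| := by
  have hf' : IntegrableOn (fun x : ℝ => f |x|) (Ioi 0) := by
    apply hf.congr_fun (fun x hx => by rw [abs_eq_self.mpr (le_of_lt hx)]) measurableSet_Ioi
  have int_Iic : IntegrableOn (fun x ↦ f |x|) (Iic 0) := by
    rw [← Measure.map_neg_eq_self (volume : Measure ℝ)]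
    have m : MeasurableEmbedding fun x : ℝ => -x := (Homeomorph.neg ℝ).measurableEmbedding
    rw [m.integrableOn_map_iff]
    simp_rw [Function.comp_def, abs_neg, neg_preimage, neg_Iic, neg_zero]
    exact (integrableOn_Ici_iff_integrableOn_Ioi (f := fun x : ℝ => f |x|) (b := 0) (μ := volume)).mpr hf'
  rw [← integrableOn_univ, ← Iic_union_Ioi (a := (0:ℝ))]
  exact int_Iic.union hf'

lemma my_integrableOn_rpow_exp {p q b : ℝ} (hp : 0 < p) (hq : -1 < q) (hb : 0 < b) :
    IntegrableOn (fun x : ℝ => x ^ q * Real.exp (-b * x ^ p)) (Ioi 0) := by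
  have h1 : IntegrableOn (fun y : ℝ => Real.exp (-y) * y ^ ((q+1)/p - 1)) (Ioi 0) :=
    Real.GammaIntegral_convergent (div_pos (by linarith) hp)
  have h2 : IntegrableOn (fun y : ℝ => Real.exp (-(b*y)) * (b*y) ^ ((q+1)/p - 1)) (Ioi 0) := by
    have := (integrableOn_Ioi_comp_mul_left_iff
      (fun y : ℝ => Real.exp (-y) * y ^ ((q+1)/p - 1)) 0 hb).mpr (by rwa [mul_zero])
    exact this
  have h2' : IntegrableOn
      (fun y : ℝ => b ^ (-((q+1)/p - 1)) * (Real.exp (-(b*y)) * (b*y) ^ ((q+1)/p - 1))) (Ioi 0) :=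
    h2.const_mul _
  have h3 : IntegrableOn (fun y : ℝ => y ^ ((q+1)/p - 1) * Real.exp (-(b*y))) (Ioi 0) := by
    apply h2'.congr_fun (fun y hy => ?_) measurableSet_Ioi
    rw [mul_rpow hb.le (le_of_lt hy)]
    rw [show b ^ (-((q+1)/p - 1)) * (Real.exp (-(b*y)) * (b ^ ((q+1)/p-1) * y ^ ((q+1)/p-1)))
        = (b ^ (-((q+1)/p - 1)) * b ^ ((q+1)/p-1)) * (y ^ ((q+1)/p-1) * Real.exp (-(b*y))) by ring,
      ← Real.rpow_add hb, neg_add_cancel, Real.rpow_zero, one_mul]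
  have h4 := (integrableOn_Ioi_comp_rpow_iff'
      (fun y : ℝ => y ^ ((q+1)/p - 1) * Real.exp (-(b*y))) (p := p) hp.ne').mpr h3
  apply h4.congr_fun (fun x hx => ?_) measurableSet_Ioi
  have hx0 : (0:ℝ) < x := hx
  rw [smul_eq_mul, ← Real.rpow_mul hx0.le, ← mul_assoc, ← Real.rpow_add hx0, neg_mul]
  congr 2
  field_simp
  ring

lemma int1 {p b : ℝ} (hp : 0 < p) (hb : 0 < b) :
    Integrable (fun u : ℝ => Real.exp (-b * |u| ^ p)) := by
  have := my_integrable_comp_abs (f := fun x : ℝ => x ^ (0:ℝ) * Real.exp (-b * x ^ p))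
    (my_integrableOn_rpow_exp hp (by norm_num) hb)
  simpa [Real.rpow_zero] using this

lemma int2 {p b : ℝ} (hp : 0 < p) (hb : 0 < b) :
    Integrable (fun u : ℝ => |u| * Real.exp (-b * |u| ^ p)) := by
  have := my_integrable_comp_abs (f := fun x : ℝ => x ^ (1:ℝ) * Real.exp (-b * x ^ p))
    (my_integrableOn_rpow_exp hp (by norm_num) hb)
  simpa [Real.rpow_one] using this

lemma phase_diff (a c : ℝ) :
    ‖Complex.exp (Complex.I * a) - Complex.exp (Complex.I * c)‖ ≤ 2 * |a - c| := by
  have h1 : Complex.exp (Complex.I * a) - Complex.exp (Complex.I * c)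
      = Complex.exp (Complex.I * c) * (Complex.exp (Complex.I * ((a:ℂ) - c)) - 1) := by
    rw [mul_sub, ← Complex.exp_add, mul_one]
    congr 1
    ring
  have habs : ‖Complex.I * ((a:ℂ) - c)‖ = |a - c| := by
    rw [norm_mul, Complex.norm_I, one_mul, ← Complex.ofReal_sub, Complex.norm_real, Real.norm_eq_abs]
  rw [h1, norm_mul]
  have hb1 : ‖Complex.exp (Complex.I * (c:ℂ))‖ = 1 := by
    simp [Complex.norm_exp]
  rw [hb1, one_mul]
  rcases le_or_gt |a - c| 1 with h | h
  · have := Complex.norm_exp_sub_one_le (x := Complex.I * ((a:ℂ) - c)) (by rw [habs]; exact h)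
    rw [habs] at this
    exact this
  · calc ‖Complex.exp (Complex.I * ((a:ℂ) - c)) - 1‖
        ≤ ‖Complex.exp (Complex.I * ((a:ℂ) - c))‖ + 1 := by
          simpa using norm_sub_le (Complex.exp (Complex.I * ((a:ℂ) - c))) 1
      _ ≤ 2 * |a - c| := by
          have : ‖Complex.exp (Complex.I * ((a:ℂ) - c))‖ = 1 := by
            simp [Complex.norm_exp]
          rw [this]; linarith

lemma norm_myexp (r a : ℝ) : ‖Complex.exp ((r:ℂ) + Complex.I * (a:ℂ))‖ = Real.exp r := by
  rw [Complex.norm_exp]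
  simp

lemma myexp_diff (r a c : ℝ) :
    ‖Complex.exp ((r:ℂ) + Complex.I * a) - Complex.exp ((r:ℂ) + Complex.I * c)‖
      ≤ Real.exp r * (2 * |a - c|) := by
  have key : ∀ e : ℝ, Complex.exp ((r:ℂ) + Complex.I * e)
      = Complex.exp (r:ℂ) * Complex.exp (Complex.I * e) := fun e => by rw [Complex.exp_add]
  rw [key a, key c, ← mul_sub, norm_mul]
  have : ‖Complex.exp ((r:ℂ))‖ = Real.exp r := by simp [Complex.norm_exp]
  rw [this]
  exact mul_le_mul_of_nonneg_left (phase_diff a c) (Real.exp_nonneg r)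

lemma val1 {p b : ℝ} (hp : 0 < p) (hb : 0 < b) :
    ∫ u : ℝ, Real.exp (-b * |u| ^ p) = 2 * (b ^ (-1/p) * (1/p) * Real.Gamma (1/p)) := by
  rw [integral_comp_abs (f := fun x : ℝ => Real.exp (-b * x ^ p))]
  have h : ∫ x in Ioi (0:ℝ), Real.exp (-b * x ^ p)
      = ∫ x in Ioi (0:ℝ), x ^ (0:ℝ) * Real.exp (-b * x ^ p) := by
    refine setIntegral_congr_fun measurableSet_Ioi (fun x hx => ?_)
    rw [Real.rpow_zero, one_mul]
  rw [h, integral_rpow_mul_exp_neg_mul_rpow hp (by norm_num) hb]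
  norm_num

lemma val2 {p b : ℝ} (hp : 0 < p) (hb : 0 < b) :
    ∫ u : ℝ, |u| * Real.exp (-b * |u| ^ p) = 2 * (b ^ (-2/p) * (1/p) * Real.Gamma (2/p)) := by
  rw [integral_comp_abs (f := fun x : ℝ => x * Real.exp (-b * x ^ p))]
  have h : ∫ x in Ioi (0:ℝ), x * Real.exp (-b * x ^ p)
      = ∫ x in Ioi (0:ℝ), x ^ (1:ℝ) * Real.exp (-b * x ^ p) := by
    refine setIntegral_congr_fun measurableSet_Ioi (fun x hx => ?_)
    rw [Real.rpow_one]
  rw [h, integral_rpow_mul_exp_neg_mul_rpow hp (by norm_num) hb]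
  norm_num

lemma sin_sq_lb {u : ℝ} (h1 : -π ≤ u) (h2 : u ≤ π) :
    u ^ 2 / π ^ 2 ≤ Real.sin (u / 2) ^ 2 := by
  have hpi := Real.pi_pos
  have habs : |u| ≤ π := abs_le.mpr ⟨h1, h2⟩
  have key : |u| / π ≤ Real.sin (|u| / 2) := by
    have h := Real.mul_le_sin (x := |u| / 2) (by positivity) (by linarith)
    calc |u| / π = 2 / π * (|u| / 2) := by field_simp
      _ ≤ Real.sin (|u| / 2) := h
  have hsq : (|u| / π) ^ 2 ≤ Real.sin (|u| / 2) ^ 2 :=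
    pow_le_pow_left₀ (by positivity) key 2
  have heq : Real.sin (|u| / 2) ^ 2 = Real.sin (u / 2) ^ 2 := by
    rcases abs_cases u with ⟨h, _⟩ | ⟨h, _⟩
    · rw [h]
    · rw [h]
      rw [show -u / 2 = -(u/2) by ring, Real.sin_neg, neg_sq]
  rw [heq] at hsq
  calc u ^ 2 / π ^ 2 = (|u| / π) ^ 2 := by rw [div_pow, sq_abs]
    _ ≤ _ := hsq

lemma symb_lower {d : ℕ} (hd : 1 ≤ d) {s : ℝ} (hs : 0 < s) (hs1 : s ≤ 1)
    {ξ : Fin d → ℝ} (hξ : ξ ∈ Set.Icc (fun _ : Fin d => -π) (fun _ : Fin d => π)) :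
    (((4:ℝ)/π^2)^s / d) * ∑ j, |ξ j| ^ (2*s) ≤ (symb d ξ) ^ s := by
  have hpi := Real.pi_pos
  obtain ⟨hl, hu⟩ := hξ
  have h2 : (4/π^2) * ∑ j, (ξ j)^2 ≤ symb d ξ := by
    rw [symb]
    have : ∀ j : Fin d, (4/π^2) * (ξ j)^2 ≤ 4 * Real.sin (ξ j / 2)^2 := by
      intro j
      have := sin_sq_lb (hl j) (hu j)
      calc (4/π^2) * (ξ j)^2 = 4 * ((ξ j)^2 / π^2) := by ring
        _ ≤ 4 * Real.sin (ξ j / 2)^2 := by linarith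
    calc (4/π^2) * ∑ j, (ξ j)^2 = ∑ j, (4/π^2) * (ξ j)^2 := Finset.mul_sum _ _ _
      _ ≤ ∑ j, 4 * Real.sin (ξ j / 2)^2 := Finset.sum_le_sum fun j _ => this j
      _ = 4 * ∑ j, Real.sin (ξ j / 2)^2 := (Finset.mul_sum _ _ _).symm
  have hsum_nonneg : (0:ℝ) ≤ ∑ j, (ξ j)^2 := Finset.sum_nonneg fun j _ => sq_nonneg _
  have h3 : ((4/π^2) * ∑ j, (ξ j)^2) ^ s ≤ (symb d ξ) ^ s :=
    Real.rpow_le_rpow (by positivity) h2 hs.le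
  have h4 : ((4/π^2) * ∑ j, (ξ j)^2) ^ s = (4/π^2)^s * (∑ j, (ξ j)^2)^s :=
    Real.mul_rpow (by positivity) hsum_nonneg
  have h5 : ∑ j, |ξ j| ^ (2*s) ≤ (d:ℝ) * (∑ j, (ξ j)^2)^s := by
    have hj : ∀ j : Fin d, |ξ j| ^ (2*s) ≤ (∑ i, (ξ i)^2)^s := by
      intro j
      have h6 : |ξ j| ^ (2*s) = ((ξ j)^2) ^ s := by
        rw [← sq_abs, ← Real.rpow_natCast |ξ j| 2, ← Real.rpow_mul (abs_nonneg _)]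
        norm_num
      rw [h6]
      exact Real.rpow_le_rpow (sq_nonneg _)
        (Finset.single_le_sum (fun i _ => sq_nonneg (ξ i)) (Finset.mem_univ j)) hs.le
    calc ∑ j, |ξ j| ^ (2*s) ≤ ∑ _j : Fin d, (∑ i, (ξ i)^2)^s :=
          Finset.sum_le_sum fun j _ => hj j
      _ = (d:ℝ) * (∑ i, (ξ i)^2)^s := by
          rw [Finset.sum_const, Finset.card_univ, Fintype.card_fin, nsmul_eq_mul]
  have hdpos : (0:ℝ) < d := by exact_mod_cast Nat.lt_of_lt_of_le Nat.zero_lt_one hd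
  calc (((4:ℝ)/π^2)^s / d) * ∑ j, |ξ j| ^ (2*s)
      ≤ (((4:ℝ)/π^2)^s / d) * ((d:ℝ) * (∑ j, (ξ j)^2)^s) := by
        apply mul_le_mul_of_nonneg_left h5 (by positivity)
    _ = (4/π^2)^s * (∑ j, (ξ j)^2)^s := by field_simp
    _ = ((4/π^2) * ∑ j, (ξ j)^2) ^ s := h4.symm
    _ ≤ (symb d ξ) ^ s := h3

lemma prodF_integrable {d : ℕ} {p b : ℝ} (hp : 0 < p) (hb : 0 < b) :
    Integrable (fun ξ : Fin d → ℝ => ∏ i, Real.exp (-b * |ξ i| ^ p)) :=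
  Integrable.fintype_prod (𝕜 := ℝ) (f := fun _ u => Real.exp (-b * |u| ^ p))
    (fun _ => int1 hp hb)

lemma prodF_val {d : ℕ} {p b : ℝ} (hp : 0 < p) (hb : 0 < b) :
    ∫ ξ : Fin d → ℝ, ∏ i, Real.exp (-b * |ξ i| ^ p)
      = (∫ u : ℝ, Real.exp (-b * |u| ^ p)) ^ d := by
  rw [volume_pi (α := fun _ : Fin d => ℝ), MeasureTheory.integral_fintype_prod_eq_pow (ι := Fin d)
    (f := fun u : ℝ => Real.exp (-b * |u| ^ p)), Fintype.card_fin]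

lemma prodFj_eq {d : ℕ} {p b : ℝ} (j : Fin d) (ξ : Fin d → ℝ) :
    |ξ j| * ∏ i, Real.exp (-b * |ξ i| ^ p)
      = ∏ i, (if i = j then fun u : ℝ => |u| * Real.exp (-b * |u| ^ p)
          else fun u : ℝ => Real.exp (-b * |u| ^ p)) (ξ i) := by
  rw [← Finset.mul_prod_erase Finset.univ _ (Finset.mem_univ j),
    ← Finset.mul_prod_erase Finset.univ
      (fun i => (if i = j then fun u : ℝ => |u| * Real.exp (-b * |u| ^ p)
          else fun u : ℝ => Real.exp (-b * |u| ^ p)) (ξ i)) (Finset.mem_univ j)]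
  rw [if_pos rfl]
  have : ∏ i ∈ Finset.univ.erase j,
      (if i = j then fun u : ℝ => |u| * Real.exp (-b * |u| ^ p)
          else fun u : ℝ => Real.exp (-b * |u| ^ p)) (ξ i)
      = ∏ i ∈ Finset.univ.erase j, Real.exp (-b * |ξ i| ^ p) :=
    Finset.prod_congr rfl fun i hi => by rw [if_neg (Finset.ne_of_mem_erase hi)]
  rw [this]
  ring

lemma prodFj_integrable {d : ℕ} {p b : ℝ} (hp : 0 < p) (hb : 0 < b) (j : Fin d) :
    Integrable (fun ξ : Fin d → ℝ => |ξ j| * ∏ i, Real.exp (-b * |ξ i| ^ p)) := by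
  have h := Integrable.fintype_prod (𝕜 := ℝ) (μ := fun _ => volume)
    (f := fun i => (if i = j then fun u : ℝ => |u| * Real.exp (-b * |u| ^ p)
          else fun u : ℝ => Real.exp (-b * |u| ^ p)))
    (fun i => by by_cases h : i = j <;> simp only [h, if_pos, if_neg, if_true, if_false] <;>
      [exact int2 hp hb; exact int1 hp hb])
  exact h.congr (Filter.Eventually.of_forall fun ξ => (prodFj_eq j ξ).symm)

lemma prodFj_val {d : ℕ} {p b : ℝ} (hp : 0 < p) (hb : 0 < b) (j : Fin d) :
    ∫ ξ : Fin d → ℝ, |ξ j| * ∏ i, Real.exp (-b * |ξ i| ^ p)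
      = (∫ u : ℝ, |u| * Real.exp (-b * |u| ^ p))
          * (∫ u : ℝ, Real.exp (-b * |u| ^ p)) ^ (d - 1) := by
  rw [integral_congr_ae (Filter.Eventually.of_forall fun ξ => prodFj_eq j ξ),
    volume_pi (α := fun _ : Fin d => ℝ), MeasureTheory.integral_fintype_prod_eq_prod (ι := Fin d)]
  rw [← Finset.mul_prod_erase Finset.univ _ (Finset.mem_univ j), if_pos rfl]
  congr 1
  rw [Finset.prod_congr rfl (fun i hi => by rw [if_neg (Finset.ne_of_mem_erase hi)]),
    Finset.prod_const, Finset.card_erase_of_mem (Finset.mem_univ j), Finset.card_univ,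
    Fintype.card_fin]

lemma integrand_cont {d : ℕ} {s : ℝ} (hs : 0 < s) (t : ℝ) (c : Fin d → ℝ) :
    Continuous fun ξ : Fin d → ℝ =>
      Complex.exp ((-(t * symb d ξ ^ s) : ℝ) + Complex.I * ((∑ j, c j * ξ j : ℝ) : ℂ)) := by
  have hrp : Continuous fun x : ℝ => x ^ s := by
    rw [continuous_iff_continuousAt]
    exact fun x => Real.continuousAt_rpow_const x s (Or.inr hs.le)
  have hsymb : Continuous (symb d) := by
    unfold symb
    exact continuous_const.mul (continuous_finset_sum _ fun j _ =>
      ((Real.continuous_sin.comp ((continuous_apply j).div_const 2)).pow 2))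
  have h1 : Continuous fun ξ : Fin d → ℝ => -(t * (symb d ξ) ^ s) :=
    (continuous_const.mul (hrp.comp hsymb)).neg
  have h2 : Continuous fun ξ : Fin d → ℝ => ∑ j, c j * ξ j :=
    continuous_finset_sum _ fun j _ => continuous_const.mul (continuous_apply j)
  exact Complex.continuous_exp.comp ((Complex.continuous_ofReal.comp h1).add
    (continuous_const.mul (Complex.continuous_ofReal.comp h2)))

/-- Pointwise translation-increment bound:
`|G_t^{(s)}(x-y) - G_t^{(s)}(x)| ≤ C t^{-d/(2s)} min{1, |y| t^{-1/(2s)}}`. -/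
theorem stmt_6 (d : ℕ) (hd : 1 ≤ d) (s : ℝ) (hs : 0 < s) (hs1 : s ≤ 1) :
    ∃ C : ℝ, 0 < C ∧ ∀ t : ℝ, 0 < t → ∀ x y : Fin d → ℤ,
      ‖latticeKernel d s t (x - y) - latticeKernel d s t x‖ ≤
        C * t ^ (-(d : ℝ) / (2 * s)) * min 1 (latNorm y * t ^ (-1 / (2 * s))) := by
  have hpi := Real.pi_pos
  have hdpos : (0:ℝ) < d := by exact_mod_cast Nat.lt_of_lt_of_le Nat.zero_lt_one hd
  set p : ℝ := 2 * s with hpdef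
  have hp : 0 < p := by positivity
  set c0 : ℝ := ((4:ℝ)/π^2)^s / d with hc0def
  have hc0 : 0 < c0 := by positivity
  set γ₀ : ℝ := 2 * (c0 ^ (-1/p) * (1/p) * Real.Gamma (1/p)) with hγ₀def
  set γ₁ : ℝ := 2 * (c0 ^ (-2/p) * (1/p) * Real.Gamma (2/p)) with hγ₁def
  have hγ₀ : 0 < γ₀ := by
    have := Real.Gamma_pos_of_pos (show (0:ℝ) < 1/p by positivity)
    positivity
  have hγ₁ : 0 < γ₁ := by
    have := Real.Gamma_pos_of_pos (show (0:ℝ) < 2/p by positivity)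
    positivity
  refine ⟨((2*π)^d)⁻¹ * max (2*γ₀^d) (2*d*(γ₁*γ₀^(d-1))), by positivity, ?_⟩
  intro t ht x y
  set b : ℝ := t * c0 with hbdef
  have hb : 0 < b := by positivity
  set K := Set.Icc (fun _ : Fin d => -π) (fun _ : Fin d => π) with hKdef
  have hKc : IsCompact K := isCompact_Icc
  set f₁ : (Fin d → ℝ) → ℂ := fun ξ =>
    Complex.exp ((-(t * symb d ξ ^ s) : ℝ) + Complex.I * ((∑ j, ((x-y) j : ℝ) * ξ j : ℝ) : ℂ))
    with hf₁def
  set f₂ : (Fin d → ℝ) → ℂ := fun ξ =>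
    Complex.exp ((-(t * symb d ξ ^ s) : ℝ) + Complex.I * ((∑ j, (x j : ℝ) * ξ j : ℝ) : ℂ))
    with hf₂def
  have hint1 : IntegrableOn f₁ K :=
    (integrand_cont hs t fun j => ((x-y) j : ℝ)).continuousOn.integrableOn_compact hKc
  have hint2 : IntegrableOn f₂ K :=
    (integrand_cont hs t fun j => (x j : ℝ)).continuousOn.integrableOn_compact hKc
  have hdiff : latticeKernel d s t (x - y) - latticeKernel d s t x
      = ((2*π)^d)⁻¹ • ∫ ξ in K, (f₁ ξ - f₂ ξ) := by
    rw [latticeKernel, latticeKernel, ← smul_sub, integral_sub hint1 hint2]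
    simp only [hf₁def, hf₂def, hKdef, Complex.ofReal_neg]
  set ν : ℝ := latNorm y with hνdef
  have hν : 0 ≤ ν := Real.sqrt_nonneg _
  -- pointwise domination of the symbol factor
  have hRF : ∀ ξ ∈ K, Real.exp (-(t * symb d ξ ^ s)) ≤ ∏ i, Real.exp (-b * |ξ i| ^ p) := by
    intro ξ hξ
    rw [← Real.exp_sum]
    apply Real.exp_le_exp.mpr
    have h1 := symb_lower hd hs hs1 hξ
    have h2 := mul_le_mul_of_nonneg_left h1 ht.le
    have h3 : ∑ i, -b * |ξ i| ^ p = -(b * ∑ i, |ξ i| ^ p) := by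
      rw [Finset.mul_sum]
      simp [neg_mul]
    rw [h3]
    have : b * ∑ i, |ξ i| ^ p = t * (c0 * ∑ i, |ξ i| ^ (2*s)) := by
      rw [hbdef, hpdef]; ring
    rw [this]
    exact neg_le_neg h2
  -- pointwise bounds on the integrand difference
  have hbd1 : ∀ ξ ∈ K, ‖f₁ ξ - f₂ ξ‖ ≤ 2 * ∏ i, Real.exp (-b * |ξ i| ^ p) := by
    intro ξ hξ
    calc ‖f₁ ξ - f₂ ξ‖ ≤ ‖f₁ ξ‖ + ‖f₂ ξ‖ := norm_sub_le _ _
      _ = 2 * Real.exp (-(t * symb d ξ ^ s)) := by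
          rw [hf₁def, hf₂def]
          simp only [← Complex.ofReal_neg]
          rw [norm_myexp, norm_myexp]; ring
      _ ≤ 2 * ∏ i, Real.exp (-b * |ξ i| ^ p) := by
          have := hRF ξ hξ; linarith
  have hbd2 : ∀ ξ ∈ K, ‖f₁ ξ - f₂ ξ‖
      ≤ 2 * ν * ∑ j, (|ξ j| * ∏ i, Real.exp (-b * |ξ i| ^ p)) := by
    intro ξ hξ
    have h := myexp_diff (-(t * symb d ξ ^ s)) (∑ j, ((x-y) j : ℝ) * ξ j) (∑ j, (x j : ℝ) * ξ j)
    have hsub : (∑ j, ((x-y) j : ℝ) * ξ j) - (∑ j, (x j : ℝ) * ξ j)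
        = ∑ j, (-(y j : ℝ)) * ξ j := by
      rw [← Finset.sum_sub_distrib]
      refine Finset.sum_congr rfl fun j _ => ?_
      have : ((x-y) j : ℝ) = (x j : ℝ) - (y j : ℝ) := by
        simp [Pi.sub_apply]
      rw [this]; ring
    have habs : |(∑ j, ((x-y) j : ℝ) * ξ j) - (∑ j, (x j : ℝ) * ξ j)| ≤ ν * ∑ j, |ξ j| := by
      rw [hsub]
      calc |∑ j, (-(y j : ℝ)) * ξ j| ≤ ∑ j, |(-(y j : ℝ)) * ξ j| :=
            Finset.abs_sum_le_sum_abs _ _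
        _ ≤ ∑ j, ν * |ξ j| := by
            refine Finset.sum_le_sum fun j _ => ?_
            rw [abs_mul, abs_neg]
            apply mul_le_mul_of_nonneg_right _ (abs_nonneg _)
            rw [hνdef, latNorm, ← Real.sqrt_sq_eq_abs]
            exact Real.sqrt_le_sqrt
              (Finset.single_le_sum (fun i _ => sq_nonneg ((y i : ℝ))) (Finset.mem_univ j))
        _ = ν * ∑ j, |ξ j| := (Finset.mul_sum _ _ _).symm
    calc ‖f₁ ξ - f₂ ξ‖ ≤ Real.exp (-(t * symb d ξ ^ s))
          * (2 * |(∑ j, ((x-y) j : ℝ) * ξ j) - (∑ j, (x j : ℝ) * ξ j)|) := h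
      _ ≤ (∏ i, Real.exp (-b * |ξ i| ^ p)) * (2 * (ν * ∑ j, |ξ j|)) := by
          apply mul_le_mul (hRF ξ hξ) (by linarith) (by positivity) (by positivity)
      _ = 2 * ν * ∑ j, (|ξ j| * ∏ i, Real.exp (-b * |ξ i| ^ p)) := by
          rw [← Finset.sum_mul]
          ring
  -- integral bounds
  set Pnum : ℝ := ∫ u : ℝ, Real.exp (-b * |u| ^ p) with hPdef
  set Qnum : ℝ := ∫ u : ℝ, |u| * Real.exp (-b * |u| ^ p) with hQdef
  set J : ℝ := ∫ ξ in K, ‖f₁ ξ - f₂ ξ‖ with hJdef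
  have hmeasK : MeasurableSet K := measurableSet_Icc
  have hnormint : IntegrableOn (fun ξ => ‖f₁ ξ - f₂ ξ‖) K := (hint1.sub hint2).norm
  have hJ1 : J ≤ 2 * Pnum ^ d := by
    calc J ≤ ∫ ξ in K, 2 * ∏ i, Real.exp (-b * |ξ i| ^ p) :=
          setIntegral_mono_on hnormint
            ((prodF_integrable hp hb).const_mul 2).integrableOn hmeasK hbd1
      _ = 2 * ∫ ξ in K, ∏ i, Real.exp (-b * |ξ i| ^ p) := integral_const_mul 2 _
      _ ≤ 2 * ∫ ξ : Fin d → ℝ, ∏ i, Real.exp (-b * |ξ i| ^ p) := by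
          apply mul_le_mul_of_nonneg_left _ (by norm_num)
          exact setIntegral_le_integral (prodF_integrable hp hb)
            (Filter.Eventually.of_forall fun ξ => Finset.prod_nonneg
              fun i _ => (Real.exp_pos _).le)
      _ = 2 * Pnum ^ d := by rw [prodF_val hp hb]
  have hSint : Integrable (fun ξ : Fin d → ℝ =>
      ∑ j, (|ξ j| * ∏ i, Real.exp (-b * |ξ i| ^ p))) :=
    integrable_finset_sum _ fun j _ => prodFj_integrable hp hb j
  have hJ2 : J ≤ 2 * ν * ((d:ℝ) * (Qnum * Pnum ^ (d-1))) := by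
    calc J ≤ ∫ ξ in K, 2 * ν * ∑ j, (|ξ j| * ∏ i, Real.exp (-b * |ξ i| ^ p)) :=
          setIntegral_mono_on hnormint ((hSint.const_mul (2*ν)).integrableOn) hmeasK hbd2
      _ = 2 * ν * ∫ ξ in K, ∑ j, (|ξ j| * ∏ i, Real.exp (-b * |ξ i| ^ p)) :=
          integral_const_mul _ _
      _ ≤ 2 * ν * ∫ ξ : Fin d → ℝ, ∑ j, (|ξ j| * ∏ i, Real.exp (-b * |ξ i| ^ p)) := by
          apply mul_le_mul_of_nonneg_left _ (by positivity)
          exact setIntegral_le_integral hSint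
            (Filter.Eventually.of_forall fun ξ => Finset.sum_nonneg fun j _ => by positivity)
      _ = 2 * ν * ((d:ℝ) * (Qnum * Pnum ^ (d-1))) := by
          rw [integral_finset_sum _ fun j _ => prodFj_integrable hp hb j]
          congr 1
          have : ∀ j : Fin d, (∫ ξ : Fin d → ℝ, |ξ j| * ∏ i, Real.exp (-b * |ξ i| ^ p))
              = Qnum * Pnum ^ (d-1) := fun j => prodFj_val hp hb j
          rw [Finset.sum_congr rfl fun j _ => this j, Finset.sum_const, Finset.card_univ,
            Fintype.card_fin, nsmul_eq_mul]
  have hmain : ‖latticeKernel d s t (x - y) - latticeKernel d s t x‖ ≤ ((2*π)^d)⁻¹ * J := by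
    rw [hdiff, norm_smul, Real.norm_eq_abs, abs_of_pos (by positivity)]
    exact mul_le_mul_of_nonneg_left (norm_integral_le_integral_norm _) (by positivity)
  -- value computations
  have hPval : Pnum = γ₀ * t ^ (-1/p) := by
    rw [hPdef, val1 hp hb, hbdef, Real.mul_rpow ht.le hc0.le, hγ₀def]
    ring
  have hQval : Qnum = γ₁ * t ^ (-2/p) := by
    rw [hQdef, val2 hp hb, hbdef, Real.mul_rpow ht.le hc0.le, hγ₁def]
    ring
  have hpow0 : (γ₀ * t ^ (-1/p)) ^ d = γ₀ ^ d * t ^ (-(d:ℝ)/(2*s)) := by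
    rw [mul_pow, ← Real.rpow_natCast (t ^ (-1/p)) d, ← Real.rpow_mul ht.le]
    congr 2
    rw [hpdef]
    ring
  have hpow1 : t ^ (-2/p) * (t ^ (-1/p)) ^ (d-1) = t ^ (-(d:ℝ)/(2*s)) * t ^ (-1/(2*s)) := by
    rw [← Real.rpow_natCast (t ^ (-1/p)) (d-1), ← Real.rpow_mul ht.le, ← Real.rpow_add ht,
      ← Real.rpow_add ht]
    congr 1
    have hcast : ((d-1:ℕ):ℝ) = (d:ℝ) - 1 := by
      rw [Nat.cast_sub hd, Nat.cast_one]
    rw [hcast, hpdef]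
    field_simp
    ring
  have hQP : 2 * ν * ((d:ℝ) * (Qnum * Pnum ^ (d-1)))
      = (2*(d:ℝ)*(γ₁*γ₀^(d-1))) * (t ^ (-(d:ℝ)/(2*s)) * (ν * t ^ (-1/(2*s)))) := by
    rw [hQval, hPval, mul_pow]
    calc 2 * ν * ((d:ℝ) * (γ₁ * t ^ (-2/p) * (γ₀^(d-1) * (t ^ (-1/p))^(d-1))))
        = (2*(d:ℝ)*(γ₁*γ₀^(d-1))) * ν * (t ^ (-2/p) * (t ^ (-1/p))^(d-1)) := by ring
      _ = _ := by rw [hpow1]; ring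
  rcases min_cases (1:ℝ) (ν * t ^ (-1/(2*s))) with ⟨hmin, _⟩ | ⟨hmin, _⟩ <;> rw [hmin]
  · calc ‖latticeKernel d s t (x - y) - latticeKernel d s t x‖
        ≤ ((2*π)^d)⁻¹ * J := hmain
      _ ≤ ((2*π)^d)⁻¹ * (2 * Pnum ^ d) := mul_le_mul_of_nonneg_left hJ1 (by positivity)
      _ = (((2*π)^d)⁻¹ * (2*γ₀^d)) * t ^ (-(d:ℝ)/(2*s)) := by
          rw [hPval, hpow0]; ring
      _ ≤ ((2*π)^d)⁻¹ * max (2*γ₀^d) (2*(d:ℝ)*(γ₁*γ₀^(d-1))) * t ^ (-(d:ℝ)/(2*s)) * 1 := by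
          rw [mul_one]
          have h1 : (0:ℝ) ≤ t ^ (-(d:ℝ)/(2*s)) := (Real.rpow_pos_of_pos ht _).le
          apply mul_le_mul_of_nonneg_right _ h1
          apply mul_le_mul_of_nonneg_left (le_max_left _ _) (by positivity)
  · calc ‖latticeKernel d s t (x - y) - latticeKernel d s t x‖
        ≤ ((2*π)^d)⁻¹ * J := hmain
      _ ≤ ((2*π)^d)⁻¹ * (2 * ν * ((d:ℝ) * (Qnum * Pnum ^ (d-1)))) :=
          mul_le_mul_of_nonneg_left hJ2 (by positivity)
      _ = (((2*π)^d)⁻¹ * (2*(d:ℝ)*(γ₁*γ₀^(d-1)))) * t ^ (-(d:ℝ)/(2*s))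
            * (ν * t ^ (-1/(2*s))) := by
          rw [hQP]; ring
      _ ≤ ((2*π)^d)⁻¹ * max (2*γ₀^d) (2*(d:ℝ)*(γ₁*γ₀^(d-1))) * t ^ (-(d:ℝ)/(2*s))
            * (ν * t ^ (-1/(2*s))) := by
          have h1 : (0:ℝ) ≤ t ^ (-(d:ℝ)/(2*s)) := (Real.rpow_pos_of_pos ht _).le
          have h2 : (0:ℝ) ≤ ν * t ^ (-1/(2*s)) := by positivity
          apply mul_le_mul_of_nonneg_right _ h2
          apply mul_le_mul_of_nonneg_right _ h1
          apply mul_le_mul_of_nonneg_left (le_max_right _ _) (by positivity)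
end

section
/- Let d ≥ 1 and s ∈ (0,1]. For every R > 0 and every family of lattice selections x_t: ℝ^d → ℤ^d satisfying sup_η |x_t(η) - t^{1/(2s)}η| ≤ C_0 uniformly in t, one has sup_{|η|≤R} |t^{d/(2s)} G_t^{(s)}(x_t(η)) - Φ_s(η)| → 0 as t → ∞. -/
open MeasureTheory Real

open Filter

/-- Euclidean norm on `ℝ^d` (as a pi type). -/
noncomputable def eucNorm {d : ℕ} (ζ : Fin d → ℝ) : ℝ :=
  Real.sqrt (∑ j, (ζ j) ^ 2)

/-- The `2s`-stable profile `Φ_s(η) = (2π)^{-d} ∫_{ℝ^d} e^{-|ζ|^{2s}} e^{iη·ζ} dζ`. -/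
noncomputable def stableProfile (d : ℕ) (s : ℝ) (η : Fin d → ℝ) : ℂ :=
  ((2 * π) ^ d)⁻¹ •
    ∫ ζ : Fin d → ℝ,
      Complex.exp (-(eucNorm ζ ^ (2 * s) : ℝ) + Complex.I * ((∑ j, η j * ζ j : ℝ) : ℂ))


open Pointwise Topology

lemma eucNorm_nonneg {d : ℕ} (ζ : Fin d → ℝ) : 0 ≤ eucNorm ζ := Real.sqrt_nonneg _

lemma eucNorm_smul {d : ℕ} {c : ℝ} (hc : 0 ≤ c) (ζ : Fin d → ℝ) :
    eucNorm (fun j => c * ζ j) = c * eucNorm ζ := by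
  unfold eucNorm
  have h : ∑ j, (c * ζ j) ^ 2 = c ^ 2 * ∑ j, ζ j ^ 2 := by
    rw [Finset.mul_sum]; exact Finset.sum_congr rfl fun j _ => by ring
  rw [h, Real.sqrt_mul (sq_nonneg c), Real.sqrt_sq hc]

lemma abs_le_eucNorm {d : ℕ} (ζ : Fin d → ℝ) (j : Fin d) : |ζ j| ≤ eucNorm ζ := by
  rw [← Real.sqrt_sq_eq_abs]
  exact Real.sqrt_le_sqrt (Finset.single_le_sum (fun i _ => sq_nonneg (ζ i)) (Finset.mem_univ j))

lemma eucNorm_le_sum_abs {d : ℕ} (ζ : Fin d → ℝ) : eucNorm ζ ≤ ∑ j, |ζ j| := by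
  rw [← Real.sqrt_sq (Finset.sum_nonneg fun j _ => abs_nonneg (ζ j))]
  apply Real.sqrt_le_sqrt
  rw [sq, Finset.sum_mul]
  apply Finset.sum_le_sum
  intro j _
  calc ζ j ^ 2 = |ζ j| * |ζ j| := by rw [← abs_mul, abs_of_nonneg (mul_self_nonneg _)]; ring_nf
  _ ≤ |ζ j| * ∑ i, |ζ i| :=
    mul_le_mul_of_nonneg_left (Finset.single_le_sum (fun i _ => abs_nonneg (ζ i))
      (Finset.mem_univ j)) (abs_nonneg _)

lemma abs_sum_mul_le {d : ℕ} (f g : Fin d → ℝ) :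
    |∑ j, f j * g j| ≤ eucNorm f * eucNorm g := by
  rw [← Real.sqrt_sq_eq_abs]
  unfold eucNorm
  rw [← Real.sqrt_mul (Finset.sum_nonneg fun j _ => sq_nonneg (f j))]
  exact Real.sqrt_le_sqrt (Finset.sum_mul_sq_le_sq_mul_sq _ _ _)

lemma sum_abs_rpow_le {d : ℕ} (ζ : Fin d → ℝ) {p : ℝ} (hp : 0 ≤ p) :
    ∑ j, |ζ j| ^ p ≤ (d : ℝ) * eucNorm ζ ^ p := by
  have := Finset.sum_le_card_nsmul Finset.univ (fun j => |ζ j| ^ p) (eucNorm ζ ^ p)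
    (fun j _ => Real.rpow_le_rpow (abs_nonneg _) (abs_le_eucNorm ζ j) hp)
  simpa [nsmul_eq_mul] using this


lemma integrable_one_dim {b p : ℝ} (hb : 0 < b) (hp : 0 < p) (k : ℕ) :
    Integrable (fun x : ℝ => |x| ^ k * Real.exp (-(b * |x| ^ p))) := by
  have hcont : Continuous fun x : ℝ => |x| ^ k * Real.exp (-(b * |x| ^ p)) :=
    (continuous_abs.pow k).mul
      ((continuous_const.mul (continuous_abs.rpow_const (fun x => Or.inr hp.le))).neg).rexp
  set n : ℕ := ⌈(k + 2 : ℝ) / p⌉₊ with hn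
  have hnp : (k + 2 : ℝ) ≤ p * n := by
    have h1 : (k + 2 : ℝ) / p ≤ n := Nat.le_ceil _
    calc (k + 2 : ℝ) = p * ((k + 2) / p) := by field_simp
    _ ≤ p * n := mul_le_mul_of_nonneg_left h1 hp.le
  set C : ℝ := 2 * (n.factorial / b ^ n) + 2 with hC
  have hCn : (0:ℝ) ≤ 2 * (n.factorial / b ^ n) := by positivity
  have key : ∀ x : ℝ, (1 + x ^ 2) * (|x| ^ k * Real.exp (-(b * |x| ^ p))) ≤ C := by
    intro x
    have hxa : (0:ℝ) ≤ |x| := abs_nonneg x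
    have hx2 : x ^ 2 = |x| ^ 2 := (sq_abs x).symm
    rcases le_or_gt (|x|) 1 with hx | hx
    · have h1 : 1 + x ^ 2 ≤ 2 := by nlinarith
      have h2 : |x| ^ k ≤ 1 := pow_le_one₀ hxa hx
      have h3 : Real.exp (-(b * |x| ^ p)) ≤ 1 := by
        rw [Real.exp_le_one_iff]
        have : 0 ≤ b * |x| ^ p := by positivity
        linarith
      have : (1 + x ^ 2) * (|x| ^ k * Real.exp (-(b * |x| ^ p))) ≤ 2 * (1 * 1) := by
        apply mul_le_mul h1 _ (by positivity) (by norm_num)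
        apply mul_le_mul h2 h3 (Real.exp_pos _).le (by norm_num)
      rw [hC]; linarith
    · have hx1 : (1:ℝ) ≤ |x| := hx.le
      have hbx : 0 < b * |x| ^ p := by positivity
      have hexp : Real.exp (-(b * |x| ^ p)) ≤ n.factorial / (b ^ n * |x| ^ (p * n)) := by
        have h1 : (b * |x| ^ p) ^ n / n.factorial ≤ Real.exp (b * |x| ^ p) :=
          Real.pow_div_factorial_le_exp _ hbx.le n
        have h2 : (b * |x| ^ p) ^ n = b ^ n * |x| ^ (p * n) := by
          rw [mul_pow, ← Real.rpow_natCast (|x| ^ p) n, ← Real.rpow_mul hxa]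
        rw [Real.exp_neg]
        have h3 : b ^ n * |x| ^ (p * n) / n.factorial ≤ Real.exp (b * |x| ^ p) := by
          rw [← h2]; exact h1
        calc (Real.exp (b * |x| ^ p))⁻¹ ≤ (b ^ n * |x| ^ (p * n) / n.factorial)⁻¹ := by
              apply inv_anti₀ (by positivity) h3
        _ = n.factorial / (b ^ n * |x| ^ (p * n)) := by rw [inv_div]
      have h1 : 1 + x ^ 2 ≤ 2 * |x| ^ 2 := by nlinarith
      have h2' : 2 * |x| ^ 2 * |x| ^ k = 2 * |x| ^ (k + 2) := by ring
      have h2 : (1 + x ^ 2) * |x| ^ k ≤ 2 * |x| ^ (k + 2) := by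
        rw [← h2']; exact mul_le_mul_of_nonneg_right h1 (by positivity)
      have h3 : |x| ^ (k + 2) ≤ |x| ^ (p * n) := by
        rw [← Real.rpow_natCast (|x|) (k + 2)]
        apply Real.rpow_le_rpow_of_exponent_le hx1
        push_cast; linarith
      have hpow : (1 + x ^ 2) * |x| ^ k ≤ 2 * |x| ^ (p * n) :=
        h2.trans (mul_le_mul_of_nonneg_left h3 (by norm_num))
      have hfin : (1 + x ^ 2) * (|x| ^ k * Real.exp (-(b * |x| ^ p)))
          ≤ 2 * |x| ^ (p * n) * (n.factorial / (b ^ n * |x| ^ (p * n))) := by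
        rw [← mul_assoc]
        exact mul_le_mul hpow hexp (Real.exp_pos _).le (by positivity)
      have heq : 2 * |x| ^ (p * n) * ((n.factorial : ℝ) / (b ^ n * |x| ^ (p * n)))
          = 2 * (n.factorial / b ^ n) := by
        have hne : |x| ^ (p * (n:ℝ)) ≠ 0 := by positivity
        field_simp
      rw [heq] at hfin
      rw [hC]; linarith
  apply Integrable.mono' ((integrable_inv_one_add_sq).const_mul C) hcont.aestronglyMeasurable
  filter_upwards with x
  have h1 : (0:ℝ) < 1 + x ^ 2 := by positivity
  rw [Real.norm_eq_abs, abs_of_nonneg (by positivity), show C * (1 + x ^ 2)⁻¹ = C / (1 + x ^ 2)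
    from (div_eq_mul_inv C _).symm, le_div_iff₀ h1]
  calc |x| ^ k * Real.exp (-(b * |x| ^ p)) * (1 + x ^ 2)
      = (1 + x ^ 2) * (|x| ^ k * Real.exp (-(b * |x| ^ p))) := by ring
  _ ≤ C := key x


lemma continuous_eucNorm {d : ℕ} : Continuous (fun ζ : Fin d → ℝ => eucNorm ζ) := by
  unfold eucNorm
  exact Real.continuous_sqrt.comp (continuous_finset_sum _ fun j _ => (continuous_apply j).pow 2)

lemma continuous_exp_eucNorm {d : ℕ} (a p : ℝ) (hp : 0 ≤ p) :
    Continuous (fun ζ : Fin d → ℝ => Real.exp (-(a * eucNorm ζ ^ p))) :=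
  ((continuous_const.mul (continuous_eucNorm.rpow_const fun _ => Or.inr hp)).neg).rexp

lemma exp_eucNorm_le_prod {d : ℕ} (hd : 1 ≤ d) {a p : ℝ} (ha : 0 < a) (hp : 0 < p)
    (ζ : Fin d → ℝ) :
    Real.exp (-(a * eucNorm ζ ^ p)) ≤ ∏ j, Real.exp (-(a / d * |ζ j| ^ p)) := by
  have hdpos : (0:ℝ) < d := by exact_mod_cast hd
  rw [← Real.exp_sum]
  apply Real.exp_le_exp.2
  have h1 : ∑ j, (a / d * |ζ j| ^ p) ≤ a * eucNorm ζ ^ p := by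
    rw [← Finset.mul_sum]
    calc a / d * ∑ j, |ζ j| ^ p ≤ a / d * ((d:ℝ) * eucNorm ζ ^ p) := by
          apply mul_le_mul_of_nonneg_left (sum_abs_rpow_le ζ hp.le) (by positivity)
    _ = a * eucNorm ζ ^ p := by field_simp
  rw [Finset.sum_neg_distrib]
  linarith
lemma integrable_exp_eucNorm {d : ℕ} (hd : 1 ≤ d) {a p : ℝ} (ha : 0 < a) (hp : 0 < p) :
    Integrable (fun ζ : Fin d → ℝ => Real.exp (-(a * eucNorm ζ ^ p))) := by
  have hdpos : (0:ℝ) < d := by exact_mod_cast hd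
  have h1 : Integrable (fun ζ : Fin d → ℝ => ∏ j, Real.exp (-(a / d * |ζ j| ^ p))) := by
    apply Integrable.fintype_prod (f := fun _ x => Real.exp (-(a / d * |x| ^ p)))
    intro i
    simpa using integrable_one_dim (div_pos ha hdpos) hp 0
  apply Integrable.mono' h1 (continuous_exp_eucNorm a p hp.le).aestronglyMeasurable
  filter_upwards with ζ
  rw [Real.norm_eq_abs, abs_of_nonneg (Real.exp_pos _).le]
  exact exp_eucNorm_le_prod hd ha hp ζ

lemma integrable_mul_exp_eucNorm {d : ℕ} (hd : 1 ≤ d) {p : ℝ} (hp : 0 < p) :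
    Integrable (fun ζ : Fin d → ℝ => eucNorm ζ * Real.exp (-(1 * eucNorm ζ ^ p))) := by
  have hdpos : (0:ℝ) < d := by exact_mod_cast hd
  have hb : (0:ℝ) < 1 / d := by positivity
  set f : Fin d → Fin d → ℝ → ℝ :=
    fun j i x => (if i = j then |x| else 1) * Real.exp (-(1 / d * |x| ^ p)) with hf
  have hfint : ∀ j i, Integrable (f j i) := by
    intro j i
    by_cases h : i = j
    · simp only [hf, h, if_true]
      simpa using integrable_one_dim hb hp 1
    · simp only [hf, if_neg h, one_mul]
      simpa using integrable_one_dim hb hp 0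
  have hg : Integrable (fun ζ : Fin d → ℝ => ∑ j, ∏ i, f j i (ζ i)) := by
    apply integrable_finset_sum
    intro j _
    exact Integrable.fintype_prod (f := f j) (fun i => hfint j i)
  apply Integrable.mono' hg ((continuous_eucNorm.mul
    (continuous_exp_eucNorm 1 p hp.le)).aestronglyMeasurable)
  filter_upwards with ζ
  have h2 : ∀ j, ∏ i, f j i (ζ i)
      = |ζ j| * Real.exp (-(1 / d * ∑ i, |ζ i| ^ p)) := by
    intro j
    rw [hf]
    simp only [Finset.prod_mul_distrib]
    rw [Finset.prod_ite_eq' Finset.univ j (fun i => |ζ i|)]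
    simp only [Finset.mem_univ, if_true]
    rw [← Real.exp_sum]
    congr 1
    rw [Finset.sum_neg_distrib, ← Finset.mul_sum]
  have hnn : 0 ≤ eucNorm ζ * Real.exp (-(1 * eucNorm ζ ^ p)) := by
    have := eucNorm_nonneg ζ; positivity
  show ‖eucNorm ζ * Real.exp (-(1 * eucNorm ζ ^ p))‖ ≤ _
  rw [Real.norm_eq_abs, abs_of_nonneg hnn]
  calc eucNorm ζ * Real.exp (-(1 * eucNorm ζ ^ p))
      ≤ (∑ j, |ζ j|) * Real.exp (-(1 / d * ∑ i, |ζ i| ^ p)) := by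
        apply mul_le_mul (eucNorm_le_sum_abs ζ) _ (Real.exp_pos _).le
          (Finset.sum_nonneg fun j _ => abs_nonneg _)
        apply Real.exp_le_exp.2
        have h3 : 1 / (d:ℝ) * ∑ i, |ζ i| ^ p ≤ 1 * eucNorm ζ ^ p := by
          calc 1 / (d:ℝ) * ∑ i, |ζ i| ^ p ≤ 1 / d * ((d:ℝ) * eucNorm ζ ^ p) := by
                apply mul_le_mul_of_nonneg_left (sum_abs_rpow_le ζ hp.le) (by positivity)
          _ = 1 * eucNorm ζ ^ p := by field_simp
        linarith
  _ = ∑ j, |ζ j| * Real.exp (-(1 / d * ∑ i, |ζ i| ^ p)) := by rw [Finset.sum_mul]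
  _ = ∑ j, ∏ i, f j i (ζ i) := by
        apply Finset.sum_congr rfl
        intro j _
        rw [h2 j]


lemma symb_nonneg (d : ℕ) (ξ : Fin d → ℝ) : 0 ≤ symb d ξ := by
  unfold symb; positivity

lemma continuous_symb (d : ℕ) : Continuous (symb d) := by
  unfold symb
  exact continuous_const.mul (continuous_finset_sum _ fun j _ =>
    (Real.continuous_sin.comp ((continuous_apply j).div_const 2)).pow 2)

lemma abs_exp_I (a : ℝ) : ‖Complex.exp (Complex.I * a)‖ = 1 := by
  rw [Complex.norm_exp]
  simp

lemma abs_exp_I_sub (a b : ℝ) :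
    ‖Complex.exp (Complex.I * a) - Complex.exp (Complex.I * b)‖ ≤ 2 * |a - b| := by
  have h1 : Complex.exp (Complex.I * a) - Complex.exp (Complex.I * b)
      = Complex.exp (Complex.I * b) * (Complex.exp (Complex.I * (a - b)) - 1) := by
    rw [mul_sub, ← Complex.exp_add, mul_one]
    ring_nf
  have hab : ((a : ℂ) - (b : ℂ)) = ((a - b : ℝ) : ℂ) := by push_cast; ring
  rw [h1, hab, norm_mul, abs_exp_I, one_mul]
  have habs : ‖Complex.I * ((a - b : ℝ) : ℂ)‖ = |a - b| := by
    rw [norm_mul, Complex.norm_I, one_mul, Complex.norm_real, Real.norm_eq_abs]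
  rcases le_or_gt (|a - b|) 1 with h | h
  · have := Complex.norm_exp_sub_one_le (x := Complex.I * ((a - b : ℝ) : ℂ)) (by rw [habs]; exact h)
    rwa [habs] at this
  · calc ‖Complex.exp (Complex.I * ((a - b : ℝ) : ℂ)) - 1‖
        ≤ ‖Complex.exp (Complex.I * ((a - b : ℝ) : ℂ))‖ + 1 := by
          simpa using norm_sub_le (Complex.exp (Complex.I * ((a - b : ℝ) : ℂ))) 1
    _ = 2 := by rw [abs_exp_I]; norm_num
    _ ≤ 2 * |a - b| := by nlinarith
lemma norm_cexp_sub (u v θ₁ θ₂ : ℝ) :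
    ‖Complex.exp (-(u:ℝ) + Complex.I * (θ₁:ℝ)) - Complex.exp (-(v:ℝ) + Complex.I * (θ₂:ℝ))‖
      ≤ |Real.exp (-u) - Real.exp (-v)| + Real.exp (-v) * (2 * |θ₁ - θ₂|) := by
  have he : ∀ (w θ : ℝ), Complex.exp (-(w:ℝ) + Complex.I * (θ:ℝ))
      = (Real.exp (-w) : ℝ) * Complex.exp (Complex.I * (θ:ℝ)) := by
    intro w θ
    rw [Complex.exp_add, Complex.ofReal_exp, Complex.ofReal_neg]
  rw [he, he]
  have hsplit : (Real.exp (-u) : ℂ) * Complex.exp (Complex.I * (θ₁:ℝ))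
        - (Real.exp (-v) : ℂ) * Complex.exp (Complex.I * (θ₂:ℝ))
      = ((Real.exp (-u) : ℂ) - Real.exp (-v)) * Complex.exp (Complex.I * (θ₁:ℝ))
        + (Real.exp (-v) : ℂ) * (Complex.exp (Complex.I * (θ₁:ℝ)) - Complex.exp (Complex.I * (θ₂:ℝ))) := by
    ring
  rw [hsplit]
  calc ‖((Real.exp (-u) : ℂ) - Real.exp (-v)) * Complex.exp (Complex.I * (θ₁:ℝ))
        + (Real.exp (-v) : ℂ) * (Complex.exp (Complex.I * (θ₁:ℝ)) - Complex.exp (Complex.I * (θ₂:ℝ)))‖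
      ≤ ‖((Real.exp (-u) : ℂ) - Real.exp (-v)) * Complex.exp (Complex.I * (θ₁:ℝ))‖
        + ‖(Real.exp (-v) : ℂ) * (Complex.exp (Complex.I * (θ₁:ℝ)) - Complex.exp (Complex.I * (θ₂:ℝ)))‖ :=
        norm_add_le _ _
  _ ≤ |Real.exp (-u) - Real.exp (-v)| + Real.exp (-v) * (2 * |θ₁ - θ₂|) := by
      apply add_le_add
      · rw [norm_mul, abs_exp_I, mul_one,
          ← Complex.ofReal_sub, Complex.norm_real, Real.norm_eq_abs]
      · rw [norm_mul, Complex.norm_real, Real.norm_eq_abs,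
          abs_of_nonneg (Real.exp_pos _).le]
        apply mul_le_mul_of_nonneg_left _ (Real.exp_pos _).le
        exact abs_exp_I_sub θ₁ θ₂


noncomputable def cfun (s t : ℝ) : ℝ := t ^ (-(1/(2*s)))
noncomputable def boxSet (d : ℕ) : Set (Fin d → ℝ) := Set.Icc (fun _ => -π) (fun _ => π)
noncomputable def Qset (d : ℕ) (s t : ℝ) : Set (Fin d → ℝ) := (fun ζ => cfun s t • ζ) ⁻¹' boxSet d
noncomputable def lkand (d : ℕ) (s t : ℝ) (x : Fin d → ℤ) (ξ : Fin d → ℝ) : ℂ :=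
  Complex.exp (-(t * (symb d ξ) ^ s : ℝ) + Complex.I * ((∑ j, (x j : ℝ) * ξ j : ℝ) : ℂ))
noncomputable def Ffun (d : ℕ) (s t : ℝ) (x : Fin d → ℤ) : (Fin d → ℝ) → ℂ :=
  (Qset d s t).indicator (fun ζ => lkand d s t x (cfun s t • ζ))

lemma cfun_pos {s t : ℝ} (ht : 0 < t) : 0 < cfun s t := Real.rpow_pos_of_pos ht _

lemma measurableSet_Qset (d : ℕ) (s t : ℝ) : MeasurableSet (Qset d s t) :=
  ((continuous_const_smul (cfun s t)).measurable) measurableSet_Icc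

lemma lemma_scaling (d : ℕ) {s t : ℝ} (hs : 0 < s) (ht : 0 < t) (x : Fin d → ℤ) :
    (t ^ ((d : ℝ) / (2 * s)) : ℝ) • latticeKernel d s t x
      = ((2 * π) ^ d)⁻¹ • ∫ ζ : Fin d → ℝ, Ffun d s t x ζ := by
  have hbox : MeasurableSet (boxSet d) := measurableSet_Icc
  have hc := cfun_pos (s := s) ht
  -- kernel as indicator integral
  have h1 : latticeKernel d s t x = ((2 * π) ^ d)⁻¹ • ∫ ξ, (boxSet d).indicator (lkand d s t x) ξ := by
    rw [latticeKernel, integral_indicator hbox]; rfl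
  -- scaling
  have h2 : ∫ ζ : Fin d → ℝ, (boxSet d).indicator (lkand d s t x) (cfun s t • ζ)
      = |((cfun s t) ^ d)⁻¹| • ∫ ξ, (boxSet d).indicator (lkand d s t x) ξ := by
    have := MeasureTheory.Measure.integral_comp_smul (volume : Measure (Fin d → ℝ))
      ((boxSet d).indicator (lkand d s t x)) (cfun s t)
    simpa [Module.finrank_pi] using this
  have h3 : (fun ζ : Fin d → ℝ => (boxSet d).indicator (lkand d s t x) (cfun s t • ζ))
      = Ffun d s t x := by
    funext ζ
    rw [Ffun, Qset]
    exact (Set.indicator_comp_right (fun ζ : Fin d → ℝ => cfun s t • ζ)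
      (s := boxSet d) (g := lkand d s t x) (x := ζ)).symm
  have h4 : ∫ ξ, (boxSet d).indicator (lkand d s t x) ξ
      = ((cfun s t) ^ d) • ∫ ζ, Ffun d s t x ζ := by
    rw [← h3, h2, smul_smul, abs_of_pos (by positivity), mul_inv_cancel₀ (by positivity), one_smul]
  have h5 : (t ^ ((d : ℝ) / (2 * s)) : ℝ) * (cfun s t) ^ d = 1 := by
    rw [cfun, ← Real.rpow_natCast (t ^ (-(1/(2*s)))) d, ← Real.rpow_mul ht.le,
      ← Real.rpow_add ht]
    rw [show (d : ℝ) / (2 * s) + -(1 / (2 * s)) * (d : ℝ) = 0 by ring, Real.rpow_zero]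
  rw [h1, h4, smul_comm, smul_smul, smul_smul, mul_assoc, h5, mul_one]


noncomputable def stInt (d : ℕ) (s : ℝ) (η : Fin d → ℝ) : (Fin d → ℝ) → ℂ :=
  fun ζ => Complex.exp (-(eucNorm ζ ^ (2 * s) : ℝ) + Complex.I * ((∑ j, η j * ζ j : ℝ) : ℂ))
lemma abs_exp_aux (r₁ r₂ : ℝ) :
    ‖Complex.exp (-(r₁ : ℂ) + Complex.I * (r₂ : ℂ))‖ = Real.exp (-r₁) := by
  rw [Complex.norm_exp]
  simp

lemma continuous_lkand (d : ℕ) {s : ℝ} (hs : 0 ≤ s) (t : ℝ) (x : Fin d → ℤ) :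
    Continuous (lkand d s t x) := by
  unfold lkand
  apply Complex.continuous_exp.comp
  apply Continuous.add
  · apply Continuous.neg
    apply Complex.continuous_ofReal.comp
    exact continuous_const.mul ((continuous_symb d).rpow_const fun _ => Or.inr hs)
  · apply continuous_const.mul
    apply Complex.continuous_ofReal.comp
    exact continuous_finset_sum _ fun j _ => continuous_const.mul (continuous_apply j)

lemma norm_lkand (d : ℕ) (s t : ℝ) (x : Fin d → ℤ) (ξ : Fin d → ℝ) :
    ‖lkand d s t x ξ‖ = Real.exp (-(t * (symb d ξ) ^ s)) := abs_exp_aux _ _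

lemma isCompact_Qset (d : ℕ) {s t : ℝ} (ht : 0 < t) : IsCompact (Qset d s t) := by
  have hc := cfun_pos (s := s) ht
  have h1 : Qset d s t = (cfun s t)⁻¹ • boxSet d := by
    ext ζ
    rw [Set.mem_smul_set_iff_inv_smul_mem₀ (inv_ne_zero hc.ne') (boxSet d) ζ, inv_inv]
    rfl
  rw [h1]
  exact (isCompact_Icc).smul _

lemma lemma_F_int (d : ℕ) {s t : ℝ} (hs : 0 < s) (ht : 0 < t) (x : Fin d → ℤ) :
    Integrable (Ffun d s t x) := by
  rw [Ffun, integrable_indicator_iff (measurableSet_Qset d s t)]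
  apply Measure.integrableOn_of_bounded (M := 1)
    ((isCompact_Qset d ht).measure_lt_top).ne
    (((continuous_lkand d hs.le t x).comp (continuous_const_smul _)).aestronglyMeasurable)
  filter_upwards with ζ
  show ‖lkand d s t x (cfun s t • ζ)‖ ≤ 1
  rw [norm_lkand]
  apply Real.exp_le_one_iff.2
  have h1 : 0 ≤ t * (symb d (cfun s t • ζ)) ^ s := by
    apply mul_nonneg ht.le (Real.rpow_nonneg (symb_nonneg _ _) s)
  linarith

lemma lemma_st_int (d : ℕ) (hd : 1 ≤ d) {s : ℝ} (hs : 0 < s) (η : Fin d → ℝ) :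
    Integrable (stInt d s η) := by
  have h1 := integrable_exp_eucNorm (d := d) hd (a := 1) one_pos (by positivity : (0:ℝ) < 2 * s)
  apply Integrable.mono' h1
  · apply Continuous.aestronglyMeasurable
    unfold stInt
    apply Complex.continuous_exp.comp
    apply Continuous.add
    · apply Continuous.neg
      apply Complex.continuous_ofReal.comp
      exact continuous_eucNorm.rpow_const fun _ => Or.inr (by positivity)
    · apply continuous_const.mul
      apply Complex.continuous_ofReal.comp
      exact continuous_finset_sum _ fun j _ => continuous_const.mul (continuous_apply j)
  · filter_upwards with ζ
    calc ‖stInt d s η ζ‖ = Real.exp (-(eucNorm ζ ^ (2 * s))) := abs_exp_aux _ _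
    _ ≤ Real.exp (-(1 * eucNorm ζ ^ (2 * s))) := by rw [one_mul]


lemma mem_Qset_iff {d : ℕ} {s t : ℝ} {ζ : Fin d → ℝ} :
    ζ ∈ Qset d s t ↔ (∀ j, -π ≤ cfun s t * ζ j) ∧ (∀ j, cfun s t * ζ j ≤ π) := by
  simp [Qset, boxSet, Set.mem_Icc, Pi.le_def, forall_and]

lemma cfun_sq {s t : ℝ} (hs : 0 < s) (ht : 0 < t) : (cfun s t) ^ 2 = t ^ (-(1/s)) := by
  unfold cfun
  rw [← Real.rpow_natCast (t ^ (-(1/(2*s)))) 2, ← Real.rpow_mul ht.le]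
  congr 1
  field_simp
  norm_num

lemma cfun_mul_rpow {s t : ℝ} (hs : 0 < s) (ht : 0 < t) :
    cfun s t * t ^ (1/(2*s)) = 1 := by
  unfold cfun
  rw [← Real.rpow_add ht]
  rw [show -(1/(2*s)) + 1/(2*s) = 0 by ring, Real.rpow_zero]

lemma eucNorm_sq {d : ℕ} (ζ : Fin d → ℝ) : ∑ j, ζ j ^ 2 = eucNorm ζ ^ 2 :=
  (Real.sq_sqrt (Finset.sum_nonneg fun j _ => sq_nonneg _)).symm

lemma tsymb_ge (d : ℕ) {s t : ℝ} (hs : 0 < s) (ht : 0 < t) {ζ : Fin d → ℝ}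
    (hζ : ζ ∈ Qset d s t) :
    (4 / π ^ 2) ^ s * eucNorm ζ ^ (2 * s) ≤ t * (symb d (cfun s t • ζ)) ^ s := by
  have hπ := Real.pi_pos
  have hc := cfun_pos (s := s) ht
  obtain ⟨h₁, h₂⟩ := mem_Qset_iff.1 hζ
  have hsin : ∀ j, (cfun s t * ζ j / π) ^ 2 ≤ Real.sin (cfun s t * ζ j / 2) ^ 2 := by
    intro j
    set y := cfun s t * ζ j with hy
    have hya : |y| ≤ π := abs_le.2 ⟨h₁ j, h₂ j⟩
    have hy2 : |y / 2| ≤ π / 2 := by rw [abs_div]; simp only [abs_two]; linarith [abs_div y 2]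
    have hj : 2 / π * |y / 2| ≤ Real.sin |y / 2| := mul_le_sin (abs_nonneg _) hy2
    have hsq : (2 / π * |y / 2|) ^ 2 ≤ Real.sin |y / 2| ^ 2 :=
      pow_le_pow_left₀ (by positivity) hj 2
    have hss : Real.sin |y / 2| ^ 2 = Real.sin (y / 2) ^ 2 := by
      rcases abs_cases (y / 2) with ⟨he, _⟩ | ⟨he, _⟩
      · rw [he]
      · rw [he, Real.sin_neg]; ring
    rw [hss] at hsq
    calc (y / π) ^ 2 = (2 / π * |y / 2|) ^ 2 := by
          rw [mul_pow, div_pow, div_pow, sq_abs]; field_simp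
    _ ≤ Real.sin (y / 2) ^ 2 := hsq
  have hsum : 4 / π ^ 2 * (cfun s t) ^ 2 * eucNorm ζ ^ 2 ≤ symb d (cfun s t • ζ) := by
    unfold symb
    have h3 : ∀ j, (cfun s t • ζ) j / 2 = cfun s t * ζ j / 2 := by
      intro j; simp [Pi.smul_apply, smul_eq_mul]
    calc 4 / π ^ 2 * (cfun s t) ^ 2 * eucNorm ζ ^ 2
        = 4 * ∑ j, (cfun s t * ζ j / π) ^ 2 := by
          rw [← eucNorm_sq, Finset.mul_sum, Finset.mul_sum]
          apply Finset.sum_congr rfl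
          intro j _
          field_simp
    _ ≤ 4 * ∑ j, Real.sin (cfun s t * ζ j / 2) ^ 2 := by
          apply mul_le_mul_of_nonneg_left (Finset.sum_le_sum fun j _ => hsin j) (by norm_num)
    _ = 4 * ∑ j, Real.sin ((cfun s t • ζ) j / 2) ^ 2 := by
          apply congrArg
          exact Finset.sum_congr rfl fun j _ => by rw [h3 j]
  have hw : (0:ℝ) ≤ 4 / π ^ 2 * (cfun s t) ^ 2 * eucNorm ζ ^ 2 := by positivity
  have h4 : (4 / π ^ 2 * (cfun s t) ^ 2 * eucNorm ζ ^ 2) ^ s ≤ (symb d (cfun s t • ζ)) ^ s :=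
    Real.rpow_le_rpow hw hsum hs.le
  have h5 : (4 / π ^ 2 * (cfun s t) ^ 2 * eucNorm ζ ^ 2) ^ s
      = (4 / π ^ 2) ^ s * t⁻¹ * eucNorm ζ ^ (2 * s) := by
    rw [Real.mul_rpow (by positivity) (sq_nonneg _), Real.mul_rpow (by positivity) (by positivity)]
    congr 1
    · congr 1
      rw [cfun_sq hs ht, ← Real.rpow_mul ht.le,
        show -(1/s) * s = -1 by field_simp, Real.rpow_neg_one]
    · rw [← Real.rpow_natCast (eucNorm ζ) 2, ← Real.rpow_mul (eucNorm_nonneg ζ)]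
      norm_num
  calc (4 / π ^ 2) ^ s * eucNorm ζ ^ (2 * s)
      = t * ((4 / π ^ 2) ^ s * t⁻¹ * eucNorm ζ ^ (2 * s)) := by
        field_simp
  _ = t * (4 / π ^ 2 * (cfun s t) ^ 2 * eucNorm ζ ^ 2) ^ s := by rw [h5]
  _ ≤ t * (symb d (cfun s t • ζ)) ^ s := by
        apply mul_le_mul_of_nonneg_left h4 ht.le


noncomputable def Hfun (d : ℕ) (s C₀ t : ℝ) (ζ : Fin d → ℝ) : ℝ :=
  |(Qset d s t).indicator (fun ζ => Real.exp (-(t * (symb d (cfun s t • ζ)) ^ s))) ζ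
    - Real.exp (-(eucNorm ζ ^ (2*s)))|
  + 2 * C₀ * cfun s t * (eucNorm ζ * Real.exp (-(1 * eucNorm ζ ^ (2*s))))
noncomputable def boundF (d : ℕ) (s C₀ : ℝ) (ζ : Fin d → ℝ) : ℝ :=
  Real.exp (-((4/π^2)^s * eucNorm ζ ^ (2*s))) + Real.exp (-(1 * eucNorm ζ ^ (2*s)))
  + 2 * C₀ * (eucNorm ζ * Real.exp (-(1 * eucNorm ζ ^ (2*s))))

lemma lemma_ptw (d : ℕ) {s t : ℝ} (hs : 0 < s) (ht : 0 < t) {C₀ : ℝ} (hC₀ : 0 ≤ C₀)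
    (x : Fin d → ℤ) (η : Fin d → ℝ)
    (hx : eucNorm (fun j => ((x j : ℝ) - t ^ (1 / (2 * s)) * η j)) ≤ C₀) (ζ : Fin d → ℝ) :
    ‖Ffun d s t x ζ - stInt d s η ζ‖ ≤ Hfun d s C₀ t ζ := by
  have hc := cfun_pos (s := s) ht
  have hN := eucNorm_nonneg ζ
  by_cases hmem : ζ ∈ Qset d s t
  · rw [Ffun, Set.indicator_of_mem hmem, Hfun, Set.indicator_of_mem hmem]
    have hθ : |(∑ j, (x j : ℝ) * (cfun s t • ζ) j) - ∑ j, η j * ζ j|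
        ≤ C₀ * (cfun s t * eucNorm ζ) := by
      have h1 : (∑ j, (x j : ℝ) * (cfun s t • ζ) j) - ∑ j, η j * ζ j
          = ∑ j, (cfun s t * (x j : ℝ) - η j) * ζ j := by
        rw [← Finset.sum_sub_distrib]
        apply Finset.sum_congr rfl
        intro j _
        simp only [Pi.smul_apply, smul_eq_mul]
        ring
      rw [h1]
      have h2 : eucNorm (fun j => cfun s t * (x j : ℝ) - η j)
          = cfun s t * eucNorm (fun j => ((x j : ℝ) - t ^ (1 / (2 * s)) * η j)) := by
        rw [← eucNorm_smul hc.le]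
        congr 1
        funext j
        rw [mul_sub, ← mul_assoc, cfun_mul_rpow hs ht, one_mul]
      calc |∑ j, (cfun s t * (x j : ℝ) - η j) * ζ j|
          ≤ eucNorm (fun j => cfun s t * (x j : ℝ) - η j) * eucNorm ζ := abs_sum_mul_le _ _
      _ ≤ (cfun s t * C₀) * eucNorm ζ := by
          apply mul_le_mul_of_nonneg_right _ hN
          rw [h2]
          exact mul_le_mul_of_nonneg_left hx hc.le
      _ = C₀ * (cfun s t * eucNorm ζ) := by ring
    calc ‖lkand d s t x (cfun s t • ζ) - stInt d s η ζ‖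
        ≤ |Real.exp (-(t * (symb d (cfun s t • ζ)) ^ s)) - Real.exp (-(eucNorm ζ ^ (2*s)))|
          + Real.exp (-(eucNorm ζ ^ (2*s)))
            * (2 * |(∑ j, (x j : ℝ) * (cfun s t • ζ) j) - ∑ j, η j * ζ j|) :=
          norm_cexp_sub _ _ _ _
    _ ≤ |Real.exp (-(t * (symb d (cfun s t • ζ)) ^ s)) - Real.exp (-(eucNorm ζ ^ (2*s)))|
          + 2 * C₀ * cfun s t * (eucNorm ζ * Real.exp (-(1 * eucNorm ζ ^ (2*s)))) := by
        apply add_le_add_right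
        rw [one_mul]
        calc Real.exp (-(eucNorm ζ ^ (2*s)))
              * (2 * |(∑ j, (x j : ℝ) * (cfun s t • ζ) j) - ∑ j, η j * ζ j|)
            ≤ Real.exp (-(eucNorm ζ ^ (2*s))) * (2 * (C₀ * (cfun s t * eucNorm ζ))) := by
              apply mul_le_mul_of_nonneg_left _ (Real.exp_pos _).le
              apply mul_le_mul_of_nonneg_left hθ (by norm_num)
        _ = 2 * C₀ * cfun s t * (eucNorm ζ * Real.exp (-(eucNorm ζ ^ (2*s)))) := by ring
  · rw [Ffun, Set.indicator_of_notMem hmem, Hfun, Set.indicator_of_notMem hmem]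
    rw [zero_sub, norm_neg]
    have h1 : ‖stInt d s η ζ‖ = Real.exp (-(eucNorm ζ ^ (2*s))) := abs_exp_aux _ _
    rw [h1]
    have h2 : |0 - Real.exp (-(eucNorm ζ ^ (2*s)))| = Real.exp (-(eucNorm ζ ^ (2*s))) := by
      rw [zero_sub, abs_neg, abs_of_pos (Real.exp_pos _)]
    rw [h2]
    have h3 : 0 ≤ 2 * C₀ * cfun s t * (eucNorm ζ * Real.exp (-(1 * eucNorm ζ ^ (2*s)))) := by
      have := Real.exp_pos (-(1 * eucNorm ζ ^ (2*s)))
      positivity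
    linarith

lemma lemma_H_aesm (d : ℕ) {s : ℝ} (hs : 0 < s) (C₀ : ℝ) (t : ℝ) :
    AEStronglyMeasurable (Hfun d s C₀ t) volume := by
  have h1 : Continuous fun ζ : Fin d → ℝ => Real.exp (-(t * (symb d (cfun s t • ζ)) ^ s)) :=
    ((continuous_const.mul (((continuous_symb d).comp
      (continuous_const_smul _)).rpow_const fun _ => Or.inr hs.le)).neg).rexp
  have h2 : Continuous fun ζ : Fin d → ℝ => Real.exp (-(eucNorm ζ ^ (2*s))) :=
    ((continuous_eucNorm.rpow_const fun _ => Or.inr (by positivity)).neg).rexp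
  have h3 : Continuous fun ζ : Fin d → ℝ =>
      2 * C₀ * cfun s t * (eucNorm ζ * Real.exp (-(1 * eucNorm ζ ^ (2*s)))) := by
    apply continuous_const.mul
    exact continuous_eucNorm.mul ((continuous_const.mul
      (continuous_eucNorm.rpow_const fun _ => Or.inr (by positivity))).neg).rexp
  have h4 : AEStronglyMeasurable
      ((Qset d s t).indicator fun ζ : Fin d → ℝ =>
        Real.exp (-(t * (symb d (cfun s t • ζ)) ^ s))) volume :=
    h1.aestronglyMeasurable.indicator (measurableSet_Qset d s t)
  exact ((h4.sub h2.aestronglyMeasurable).norm.add h3.aestronglyMeasurable)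

lemma lemma_H_le (d : ℕ) {s t : ℝ} (hs : 0 < s) (ht : 1 ≤ t) {C₀ : ℝ} (hC₀ : 0 ≤ C₀)
    (ζ : Fin d → ℝ) : ‖Hfun d s C₀ t ζ‖ ≤ boundF d s C₀ ζ := by
  have ht0 : (0:ℝ) < t := lt_of_lt_of_le one_pos ht
  have hN := eucNorm_nonneg ζ
  have hc := cfun_pos (s := s) ht0
  have hc1 : cfun s t ≤ 1 := by
    apply Real.rpow_le_one_of_one_le_of_nonpos ht
    have : 0 < 1/(2*s) := by positivity
    linarith
  have hind : (Qset d s t).indicator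
      (fun ζ : Fin d → ℝ => Real.exp (-(t * (symb d (cfun s t • ζ)) ^ s))) ζ
      ≤ Real.exp (-((4/π^2)^s * eucNorm ζ ^ (2*s))) := by
    by_cases hmem : ζ ∈ Qset d s t
    · rw [Set.indicator_of_mem hmem]
      apply Real.exp_le_exp.2
      have := tsymb_ge d hs ht0 hmem
      linarith
    · rw [Set.indicator_of_notMem hmem]
      exact (Real.exp_pos _).le
  have hind0 : 0 ≤ (Qset d s t).indicator
      (fun ζ : Fin d → ℝ => Real.exp (-(t * (symb d (cfun s t • ζ)) ^ s))) ζ :=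
    Set.indicator_nonneg (fun _ _ => (Real.exp_pos _).le) ζ
  have habs : |(Qset d s t).indicator
      (fun ζ : Fin d → ℝ => Real.exp (-(t * (symb d (cfun s t • ζ)) ^ s))) ζ
      - Real.exp (-(eucNorm ζ ^ (2*s)))|
      ≤ Real.exp (-((4/π^2)^s * eucNorm ζ ^ (2*s))) + Real.exp (-(1 * eucNorm ζ ^ (2*s))) := by
    rw [abs_sub_comm]
    apply (abs_sub _ _).trans
    rw [abs_of_pos (Real.exp_pos _), abs_of_nonneg hind0, one_mul]
    linarith
  have hsecond : 2 * C₀ * cfun s t * (eucNorm ζ * Real.exp (-(1 * eucNorm ζ ^ (2*s))))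
      ≤ 2 * C₀ * (eucNorm ζ * Real.exp (-(1 * eucNorm ζ ^ (2*s)))) := by
    have hnn : 0 ≤ eucNorm ζ * Real.exp (-(1 * eucNorm ζ ^ (2*s))) := by
      have := Real.exp_pos (-(1 * eucNorm ζ ^ (2*s))); positivity
    calc 2 * C₀ * cfun s t * (eucNorm ζ * Real.exp (-(1 * eucNorm ζ ^ (2*s))))
        ≤ 2 * C₀ * 1 * (eucNorm ζ * Real.exp (-(1 * eucNorm ζ ^ (2*s)))) := by
          apply mul_le_mul_of_nonneg_right _ hnn
          apply mul_le_mul_of_nonneg_left hc1 (by positivity)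
    _ = 2 * C₀ * (eucNorm ζ * Real.exp (-(1 * eucNorm ζ ^ (2*s)))) := by ring
  have hHnn : 0 ≤ Hfun d s C₀ t ζ := by
    rw [Hfun]
    have h3 : 0 ≤ 2 * C₀ * cfun s t * (eucNorm ζ * Real.exp (-(1 * eucNorm ζ ^ (2*s)))) := by
      have := Real.exp_pos (-(1 * eucNorm ζ ^ (2*s))); positivity
    positivity
  rw [Real.norm_eq_abs, abs_of_nonneg hHnn, Hfun, boundF]
  linarith

lemma lemma_boundF_int (d : ℕ) (hd : 1 ≤ d) {s : ℝ} (hs : 0 < s) {C₀ : ℝ} :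
    Integrable (boundF d s C₀) := by
  have hπ := Real.pi_pos
  have h2s : (0:ℝ) < 2 * s := by positivity
  have h1 := integrable_exp_eucNorm (d := d) hd
    (a := (4/π^2)^s) (Real.rpow_pos_of_pos (by positivity) s) h2s
  have h2 := integrable_exp_eucNorm (d := d) hd (a := 1) one_pos h2s
  have h3 := (integrable_mul_exp_eucNorm (d := d) hd h2s).const_mul (2 * C₀)
  exact (h1.add h2).add h3


lemma cfun_tendsto {s : ℝ} (hs : 0 < s) : Tendsto (fun t => cfun s t) atTop (𝓝 0) :=
  tendsto_rpow_neg_atTop (by positivity)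

lemma sin_div_tendsto : Tendsto (fun y : ℝ => Real.sin y / y) (𝓝[≠] (0:ℝ)) (𝓝 1) := by
  have h := Real.hasDerivAt_sin 0
  rw [hasDerivAt_iff_tendsto_slope] at h
  rw [Real.cos_zero] at h
  apply h.congr
  intro y
  simp [slope_def_field]

lemma coord_tendsto (d : ℕ) {s : ℝ} (hs : 0 < s) (ζ : Fin d → ℝ) (j : Fin d) :
    Tendsto (fun t => 4 * t ^ (1/s) * Real.sin (cfun s t * ζ j / 2) ^ 2) atTop
      (𝓝 (ζ j ^ 2)) := by
  by_cases hzj : ζ j = 0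
  · simp only [hzj, mul_zero, zero_div, Real.sin_zero]
    norm_num
  · have hu : Tendsto (fun t => cfun s t * ζ j / 2) atTop (𝓝[≠] (0:ℝ)) := by
      rw [tendsto_nhdsWithin_iff]
      constructor
      · have := ((cfun_tendsto hs).mul_const (ζ j)).div_const 2
        simpa using this
      · filter_upwards [eventually_gt_atTop 0] with t ht
        have hc := cfun_pos (s := s) ht
        simp only [Set.mem_compl_iff, Set.mem_singleton_iff]
        intro hcontra
        apply hzj
        have h0 : cfun s t * ζ j = 0 :=
          (div_eq_zero_iff.1 hcontra).resolve_right (by norm_num)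
        rcases mul_eq_zero.1 h0 with h | h
        · exact absurd h hc.ne'
        · exact h
    have hcomp : Tendsto
        (fun t => Real.sin (cfun s t * ζ j / 2) / (cfun s t * ζ j / 2)) atTop (𝓝 1) :=
      sin_div_tendsto.comp hu
    have hmain : Tendsto
        (fun t => ζ j ^ 2 * (Real.sin (cfun s t * ζ j / 2) / (cfun s t * ζ j / 2)) ^ 2)
        atTop (𝓝 (ζ j ^ 2 * 1 ^ 2)) := (hcomp.pow 2).const_mul _
    rw [one_pow, mul_one] at hmain
    apply hmain.congr'
    filter_upwards [eventually_gt_atTop 0] with t ht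
    have hc := cfun_pos (s := s) ht
    have hct : (cfun s t) ^ 2 * t ^ (1/s) = 1 := by
      rw [cfun_sq hs ht, ← Real.rpow_add ht, show -(1/s) + 1/s = 0 by ring, Real.rpow_zero]
    have hune : cfun s t * ζ j / 2 ≠ 0 := by positivity
    rw [div_pow, ← sub_eq_zero]
    have h2 : (cfun s t * ζ j / 2) ^ 2 ≠ 0 := pow_ne_zero 2 hune
    field_simp
    linear_combination (-4 * Real.sin (ζ j * cfun s t / 2) ^ 2) * hct

lemma limitu (d : ℕ) {s : ℝ} (hs : 0 < s) (ζ : Fin d → ℝ) :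
    Tendsto (fun t => t * (symb d (cfun s t • ζ)) ^ s) atTop
      (𝓝 (eucNorm ζ ^ (2 * s))) := by
  have inner : Tendsto (fun t => t ^ (1/s) * symb d (cfun s t • ζ)) atTop
      (𝓝 (∑ j, ζ j ^ 2)) := by
    have heq : ∀ t : ℝ, t ^ (1/s) * symb d (cfun s t • ζ)
        = ∑ j, 4 * t ^ (1/s) * Real.sin (cfun s t * ζ j / 2) ^ 2 := by
      intro t
      have hsymb : symb d (cfun s t • ζ) = ∑ j, 4 * Real.sin (cfun s t * ζ j / 2) ^ 2 := by
        rw [symb, Finset.mul_sum]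
        apply Finset.sum_congr rfl
        intro j _
        simp only [Pi.smul_apply, smul_eq_mul]
      rw [hsymb, Finset.mul_sum]
      apply Finset.sum_congr rfl
      intro j _
      ring
    rw [funext heq]
    exact tendsto_finset_sum _ fun j _ => coord_tendsto d hs ζ j
  have hcont : ContinuousAt (fun x : ℝ => x ^ s) (∑ j, ζ j ^ 2) :=
    Real.continuousAt_rpow_const _ _ (Or.inr hs.le)
  have hcomp : Tendsto (fun t => (t ^ (1/s) * symb d (cfun s t • ζ)) ^ s) atTop
      (𝓝 ((∑ j, ζ j ^ 2) ^ s)) := hcont.tendsto.comp inner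
  have hlimeq : (∑ j, ζ j ^ 2) ^ s = eucNorm ζ ^ (2 * s) := by
    rw [eucNorm_sq, ← Real.rpow_natCast (eucNorm ζ) 2, ← Real.rpow_mul (eucNorm_nonneg ζ)]
    norm_num
  rw [hlimeq] at hcomp
  apply hcomp.congr'
  filter_upwards [eventually_gt_atTop 0] with t ht
  rw [Real.mul_rpow (Real.rpow_nonneg ht.le _) (symb_nonneg _ _), ← Real.rpow_mul ht.le,
    show 1/s * s = 1 by field_simp, Real.rpow_one]

lemma lemma_H_tendsto (d : ℕ) {s C₀ : ℝ} (hs : 0 < s) (ζ : Fin d → ℝ) :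
    Tendsto (fun t => Hfun d s C₀ t ζ) atTop (𝓝 0) := by
  have hπ := Real.pi_pos
  have hQev : ∀ᶠ t in atTop, ζ ∈ Qset d s t := by
    have hj : ∀ j : Fin d, ∀ᶠ t in atTop, -π ≤ cfun s t * ζ j ∧ cfun s t * ζ j ≤ π := by
      intro j
      have h1 : Tendsto (fun t => cfun s t * ζ j) atTop (𝓝 0) := by
        simpa using (cfun_tendsto hs).mul_const (ζ j)
      have h2 : Set.Icc (-π) π ∈ 𝓝 (0:ℝ) := Icc_mem_nhds (by linarith) hπ
      filter_upwards [h1.eventually_mem h2] with t ht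
      exact ht
    have := (Filter.eventually_all (ι := Fin d)).2 hj
    filter_upwards [this] with t ht
    rw [mem_Qset_iff]
    exact ⟨fun j => (ht j).1, fun j => (ht j).2⟩
  have T1 : Tendsto (fun t => Real.exp (-(t * (symb d (cfun s t • ζ)) ^ s))) atTop
      (𝓝 (Real.exp (-(eucNorm ζ ^ (2*s))))) :=
    (Real.continuous_exp.continuousAt.tendsto).comp (limitu d hs ζ).neg
  have Tind : Tendsto (fun t => (Qset d s t).indicator
      (fun ζ => Real.exp (-(t * (symb d (cfun s t • ζ)) ^ s))) ζ) atTop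
      (𝓝 (Real.exp (-(eucNorm ζ ^ (2*s))))) := by
    apply T1.congr'
    filter_upwards [hQev] with t ht
    rw [Set.indicator_of_mem ht]
  have Tabs0 : Tendsto (fun t => (Qset d s t).indicator
      (fun ζ => Real.exp (-(t * (symb d (cfun s t • ζ)) ^ s))) ζ
      - Real.exp (-(eucNorm ζ ^ (2*s)))) atTop
      (𝓝 (Real.exp (-(eucNorm ζ ^ (2*s))) - Real.exp (-(eucNorm ζ ^ (2*s))))) :=
    Tind.sub tendsto_const_nhds
  have Tabs : Tendsto (fun t => |(Qset d s t).indicator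
      (fun ζ => Real.exp (-(t * (symb d (cfun s t • ζ)) ^ s))) ζ
      - Real.exp (-(eucNorm ζ ^ (2*s)))|) atTop (𝓝 0) := by
    have := Tabs0.abs
    simpa only [sub_self, abs_zero] using this
  have Tsec : Tendsto (fun t => 2 * C₀ * cfun s t
      * (eucNorm ζ * Real.exp (-(1 * eucNorm ζ ^ (2*s))))) atTop (𝓝 0) := by
    have := ((cfun_tendsto hs).const_mul (2 * C₀)).mul_const
      (eucNorm ζ * Real.exp (-(1 * eucNorm ζ ^ (2*s))))
    simpa only [mul_zero, zero_mul] using this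
  have hfin := Tabs.add Tsec
  rw [add_zero] at hfin
  exact hfin


lemma lemma_int_tendsto (d : ℕ) (hd : 1 ≤ d) {s C₀ : ℝ} (hs : 0 < s) (hC₀ : 0 ≤ C₀) :
    Tendsto (fun t => ∫ ζ : Fin d → ℝ, Hfun d s C₀ t ζ) atTop (𝓝 0) := by
  have h := tendsto_integral_filter_of_dominated_convergence (μ := volume) (l := atTop)
    (F := fun t => Hfun d s C₀ t) (f := fun _ => (0:ℝ)) (boundF d s C₀)
    (Eventually.of_forall fun t => lemma_H_aesm d hs C₀ t)
    (by
      filter_upwards [eventually_ge_atTop (1:ℝ)] with t ht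
      exact ae_of_all _ (fun ζ => lemma_H_le d hs ht hC₀ ζ))
    (lemma_boundF_int d hd hs)
    (ae_of_all _ fun ζ => lemma_H_tendsto d hs ζ)
  simpa using h

/-- Local limit scaling: ... -/
theorem stmt_16 (d : ℕ) (hd : 1 ≤ d) (s : ℝ) (hs : 0 < s) (hs1 : s ≤ 1)
    (R : ℝ) (hR : 0 < R) (C₀ : ℝ) (hC₀ : 0 < C₀)
    (xt : ℝ → (Fin d → ℝ) → (Fin d → ℤ))
    (hxt : ∀ t : ℝ, 0 < t → ∀ η : Fin d → ℝ,
      eucNorm (fun j => ((xt t η j : ℝ) - t ^ (1 / (2 * s)) * η j)) ≤ C₀) :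
    ∀ ε : ℝ, 0 < ε → ∃ T : ℝ, ∀ t : ℝ, T ≤ t → ∀ η : Fin d → ℝ, eucNorm η ≤ R →
      ‖(t ^ ((d : ℝ) / (2 * s)) : ℝ) • latticeKernel d s t (xt t η)
          - stableProfile d s η‖ < ε := by
  intro ε hε
  have hπ := Real.pi_pos
  have h2π : (0:ℝ) < (2 * π) ^ d := by positivity
  have hεb : (0:ℝ) < ε * (2 * π) ^ d := by positivity
  have hev : ∀ᶠ t : ℝ in atTop,
      (∫ ζ : Fin d → ℝ, Hfun d s C₀ t ζ) < ε * (2 * π) ^ d ∧ (1:ℝ) ≤ t := by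
    have h1 := (lemma_int_tendsto d hd hs hC₀.le).eventually (gt_mem_nhds hεb)
    exact h1.and (eventually_ge_atTop 1)
  obtain ⟨T, hT⟩ := eventually_atTop.1 hev
  refine ⟨T, fun t htT η hηR => ?_⟩
  obtain ⟨hint, ht1⟩ := hT t htT
  have ht0 : (0:ℝ) < t := lt_of_lt_of_le one_pos ht1
  have hHint : Integrable (Hfun d s C₀ t) :=
    Integrable.mono' (lemma_boundF_int d hd hs) (lemma_H_aesm d hs C₀ t)
      (ae_of_all _ (fun ζ => lemma_H_le d hs ht1 hC₀.le ζ))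
  rw [lemma_scaling d hs ht0 (xt t η)]
  have hstp : stableProfile d s η = ((2 * π) ^ d)⁻¹ • ∫ ζ : Fin d → ℝ, stInt d s η ζ := rfl
  rw [hstp, ← smul_sub]
  rw [norm_smul, Real.norm_eq_abs, abs_of_pos (inv_pos.2 h2π)]
  have hsub : (∫ ζ : Fin d → ℝ, Ffun d s t (xt t η) ζ) - ∫ ζ : Fin d → ℝ, stInt d s η ζ
      = ∫ ζ : Fin d → ℝ, (Ffun d s t (xt t η) ζ - stInt d s η ζ) :=
    (integral_sub (lemma_F_int d hs ht0 _) (lemma_st_int d hd hs η)).symm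
  rw [hsub]
  have hnorm : ‖∫ ζ : Fin d → ℝ, (Ffun d s t (xt t η) ζ - stInt d s η ζ)‖
      ≤ ∫ ζ : Fin d → ℝ, Hfun d s C₀ t ζ := by
    apply (norm_integral_le_integral_norm _).trans
    apply integral_mono_of_nonneg (ae_of_all _ fun ζ => norm_nonneg _) hHint
    exact ae_of_all _ (fun ζ => lemma_ptw d hs ht0 hC₀.le (xt t η) η (hxt t ht0 η) ζ)
  calc ((2 * π) ^ d)⁻¹ * ‖∫ ζ : Fin d → ℝ, (Ffun d s t (xt t η) ζ - stInt d s η ζ)‖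
      ≤ ((2 * π) ^ d)⁻¹ * ∫ ζ : Fin d → ℝ, Hfun d s C₀ t ζ :=
        mul_le_mul_of_nonneg_left hnorm (inv_pos.2 h2π).le
  _ < ((2 * π) ^ d)⁻¹ * (ε * (2 * π) ^ d) :=
        (mul_lt_mul_iff_right₀ (inv_pos.2 h2π)).2 hint
  _ = ε := by field_simp
end
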